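/- arXiv:1403.5540 — 9 statements merged into one kernel-verified Lean document; each statement's English description precedes it below -/
import Mathlib

section
/- If (u_1,…,u_r) and (v_1,…,v_s) are two maximal admissible tuples, then the linear span of {u_1,…,u_r} equals the linear span of {v_1,…,v_s}. -/
open MeasureTheory Filter
open scoped RealInnerProductSpace

noncomputable section

/-- The positive orthant `Q` of `ℝ^d`. -/
def Qpos (d : ℕ) : Set (EuclideanSpace ℝ (Fin d)) := {x | ∀ i, 0 ≤ x i}

/-- An `r`-tuple `(u 0, …, u (r-1))` of vectors of the orthant is *admissible* if the vectors
are linearly independent, `μ(u_1^-) = 1`, and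
`μ(u_k^- ∩ u_{k-1}^⊥ ∩ ⋯ ∩ u_1^⊥) = μ(u_{k-1}^⊥ ∩ ⋯ ∩ u_1^⊥)` for `k = 2, …, r`
(the case `k = 1` of the displayed condition reads `μ(u_1^-) = μ(ℝ^d) = 1`). -/
def Admissible {d : ℕ} (μ : Measure (EuclideanSpace ℝ (Fin d))) {r : ℕ}
    (u : Fin r → EuclideanSpace ℝ (Fin d)) : Prop :=
  (∀ k, u k ∈ Qpos d) ∧ LinearIndependent ℝ u ∧
    ∀ k : Fin r,
      μ ({x | ⟪x, u k⟫ ≤ 0} ∩ {x | ∀ j, j < k → ⟪x, u j⟫ = 0}) =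
        μ {x | ∀ j, j < k → ⟪x, u j⟫ = 0}

/-- An admissible tuple is *maximal* if no vector `v ∈ Q` can be appended to it so that the
resulting tuple is still admissible. -/
def MaximalAdmissible {d : ℕ} (μ : Measure (EuclideanSpace ℝ (Fin d))) {r : ℕ}
    (u : Fin r → EuclideanSpace ℝ (Fin d)) : Prop :=
  Admissible μ u ∧ ∀ v ∈ Qpos d, ¬ Admissible μ (Fin.snoc u v)

/-- Key step: if `v` is maximal admissible and `w` is an orthant vector such that
`⟪x, w⟫ ≤ 0` holds `μ`-a.e. on the orthogonal set of `v`, then `w` lies in the span of `v`. -/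
lemma mem_span_of_maximal {d : ℕ} (μ : Measure (EuclideanSpace ℝ (Fin d)))
    {s : ℕ} {v : Fin s → EuclideanSpace ℝ (Fin d)}
    (hv : MaximalAdmissible μ v) {w : EuclideanSpace ℝ (Fin d)} (hwQ : w ∈ Qpos d)
    (hm : μ ({x | ⟪x, w⟫ ≤ 0} ∩ {x | ∀ j : Fin s, ⟪x, v j⟫ = 0}) =
      μ {x | ∀ j : Fin s, ⟪x, v j⟫ = 0}) :
    w ∈ Submodule.span ℝ (Set.range v) := by
  by_contra hw
  apply hv.2 w hwQ
  refine ⟨?_, ?_, ?_⟩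
  · intro k
    refine Fin.lastCases ?_ ?_ k
    · simpa using hwQ
    · intro i; simpa using hv.1.1 i
  · exact linearIndependent_fin_snoc.2 ⟨hv.1.2.1, hw⟩
  · intro k
    refine Fin.lastCases ?_ ?_ k
    · have h1 : {x : EuclideanSpace ℝ (Fin d) |
          ∀ j, j < Fin.last s → ⟪x, (Fin.snoc v w : Fin (s+1) → EuclideanSpace ℝ (Fin d)) j⟫ = 0} =
          {x | ∀ j : Fin s, ⟪x, v j⟫ = 0} := by
        ext x
        constructor
        · intro h j
          have := h (Fin.castSucc j) (Fin.castSucc_lt_last j)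
          simpa using this
        · intro h j hj
          have hj' : j ≠ Fin.last s := ne_of_lt hj
          rcases Fin.exists_castSucc_eq.2 hj' with ⟨i, rfl⟩
          simpa using h i
      have h2 : {x : EuclideanSpace ℝ (Fin d) | ⟪x, (Fin.snoc v w : Fin (s+1) → EuclideanSpace ℝ (Fin d)) (Fin.last s)⟫ ≤ 0} =
          {x | ⟪x, w⟫ ≤ 0} := by simp
      rw [h1, h2]; exact hm
    · intro i
      have h1 : {x : EuclideanSpace ℝ (Fin d) |
          ∀ j, j < Fin.castSucc i → ⟪x, (Fin.snoc v w : Fin (s+1) → EuclideanSpace ℝ (Fin d)) j⟫ = 0} =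
          {x | ∀ j, j < i → ⟪x, v j⟫ = 0} := by
        ext x
        constructor
        · intro h j hj
          have := h (Fin.castSucc j) (by simpa using hj)
          simpa using this
        · intro h j hj
          have hj' : j ≠ Fin.last s := by
            intro hjl
            rw [hjl] at hj
            exact absurd hj (not_lt.2 (Fin.le_last _))
          rcases Fin.exists_castSucc_eq.2 hj' with ⟨j', rfl⟩
          have : j' < i := by simpa using hj
          simpa using h j' this
      have h2 : {x : EuclideanSpace ℝ (Fin d) | ⟪x, (Fin.snoc v w : Fin (s+1) → EuclideanSpace ℝ (Fin d)) (Fin.castSucc i)⟫ ≤ 0} =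
          {x | ⟪x, v i⟫ ≤ 0} := by simp
      rw [h1, h2]
      exact hv.1.2.2 i

/-- One inclusion of the spans: every `u k` lies in the span of `v`. -/
lemma span_le_span {d : ℕ} (μ : Measure (EuclideanSpace ℝ (Fin d))) [IsProbabilityMeasure μ]
    {r s : ℕ} {u : Fin r → EuclideanSpace ℝ (Fin d)} {v : Fin s → EuclideanSpace ℝ (Fin d)}
    (hu : Admissible μ u) (hv : MaximalAdmissible μ v) :
    Submodule.span ℝ (Set.range u) ≤ Submodule.span ℝ (Set.range v) := by
  have step : ∀ k : Fin r, (∀ j, j < k → u j ∈ Submodule.span ℝ (Set.range v)) →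
      u k ∈ Submodule.span ℝ (Set.range v) := by
    intro k ih
    · -- E_v ⊆ E_k^u
      set Ev : Set (EuclideanSpace ℝ (Fin d)) := {x | ∀ j : Fin s, ⟪x, v j⟫ = 0} with hEv
      set Eku : Set (EuclideanSpace ℝ (Fin d)) := {x | ∀ j, j < k → ⟪x, u j⟫ = 0} with hEku
      have hsub : Ev ⊆ Eku := by
        intro x hx j hj
        have hxker : Submodule.span ℝ (Set.range v) ≤ LinearMap.ker (innerSL ℝ x : EuclideanSpace ℝ (Fin d) →ₗ[ℝ] ℝ) := by
          rw [Submodule.span_le]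
          rintro _ ⟨i, rfl⟩
          exact hx i
        have := hxker (ih j hj)
        simpa using this
      set A : Set (EuclideanSpace ℝ (Fin d)) := {x | ⟪x, u k⟫ ≤ 0} with hA
      have hAm : MeasurableSet A := by
        have : IsClosed A :=
          isClosed_le (continuous_id.inner continuous_const) continuous_const
        exact this.measurableSet
      have hEku_null : μ (Eku \ A) = 0 := by
        have hsplit : μ (Eku ∩ A) + μ (Eku \ A) = μ Eku := measure_inter_add_diff _ hAm
        have hAE : μ (A ∩ Eku) = μ Eku := hu.2.2 k
        rw [Set.inter_comm] at hAE
        have hfin : μ (Eku ∩ A) ≠ ⊤ := measure_ne_top μ _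
        rw [hAE] at hsplit
        exact (ENNReal.add_right_inj (measure_ne_top μ Eku)).1 (by rw [hsplit, add_zero])
      have hEv_null : μ (Ev \ A) = 0 :=
        le_antisymm (le_trans (measure_mono (Set.diff_subset_diff_left hsub)) hEku_null.le)
          (zero_le)
      have hm : μ (A ∩ Ev) = μ Ev := by
        have hsplit : μ (Ev ∩ A) + μ (Ev \ A) = μ Ev := measure_inter_add_diff _ hAm
        rw [hEv_null, add_zero] at hsplit
        rwa [Set.inter_comm]
      exact mem_span_of_maximal μ hv (hu.1 k) hm
  have key : ∀ k : Fin r, u k ∈ Submodule.span ℝ (Set.range v) := by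
    have H : ∀ n : ℕ, ∀ k : Fin r, (k : ℕ) ≤ n → u k ∈ Submodule.span ℝ (Set.range v) := by
      intro n
      induction n with
      | zero =>
        intro k hk
        exact step k (fun j hj => absurd (Fin.lt_def.1 hj) (by omega))
      | succ n ihn =>
        intro k hk
        exact step k (fun j hj => ihn j (by
          have := Fin.lt_def.1 hj; omega))
    intro k
    exact H k k le_rfl
  rw [Submodule.span_le]
  rintro _ ⟨k, rfl⟩
  exact key k

/-- Any two maximal admissible tuples generate the same linear space. -/
theorem stmt2 (d : ℕ) (hd : 1 ≤ d)
    (μ : Measure (EuclideanSpace ℝ (Fin d))) [IsProbabilityMeasure μ]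
    {r s : ℕ} (u : Fin r → EuclideanSpace ℝ (Fin d)) (v : Fin s → EuclideanSpace ℝ (Fin d))
    (hu : MaximalAdmissible μ u) (hv : MaximalAdmissible μ v) :
    Submodule.span ℝ (Set.range u) = Submodule.span ℝ (Set.range v) := by
  exact le_antisymm (span_le_span μ hu.1 hv) (span_le_span μ hv.1 hu)
end
end

section
/- The infimum of the Laplace transform over the orthant decomposes along the reduced support: inf_{z∈Q} L_μ(z) = inf_{v ∈ V^+} ∫_V exp(⟨v,y⟩) dμ(y). -/
open MeasureTheory Filter
open scoped RealInnerProductSpace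

noncomputable section

/-- The Laplace transform `L_μ(z) = ∫ exp⟨z,y⟫ dμ(y)`. -/
def laplace {d : ℕ} (μ : Measure (EuclideanSpace ℝ (Fin d)))
    (z : EuclideanSpace ℝ (Fin d)) : ℝ :=
  ∫ y, Real.exp ⟪z, y⟫ ∂μ

/-- The reduced support `V = span{u_1,…,u_r}^⊥` associated with a (maximal admissible) tuple. -/
def Vred {d : ℕ} {r : ℕ} (u : Fin r → EuclideanSpace ℝ (Fin d)) :
    Submodule ℝ (EuclideanSpace ℝ (Fin d)) :=
  (Submodule.span ℝ (Set.range u))ᗮ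

/-- The cone `V^+ = V ∩ ⋃_{h ∈ V^⊥} (Q − h)`. -/
def Vplus {d : ℕ} {r : ℕ} (u : Fin r → EuclideanSpace ℝ (Fin d)) :
    Set (EuclideanSpace ℝ (Fin d)) :=
  {v | v ∈ Vred u ∧ ∃ h ∈ (Vred u)ᗮ, v + h ∈ Qpos d}

/- ====== auxiliary lemmas ====== -/

namespace Stmt3Aux

variable {d r : ℕ}

/-- The intersection of the first `k` hyperplanes. -/
def Sset (u : Fin r → EuclideanSpace ℝ (Fin d)) (k : ℕ) : Set (EuclideanSpace ℝ (Fin d)) :=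
  {x | ∀ j : Fin r, (j : ℕ) < k → ⟪x, u j⟫ = 0}

lemma measurableSet_Sset (u : Fin r → EuclideanSpace ℝ (Fin d)) (k : ℕ) :
    MeasurableSet (Sset u k) := by
  have h : Sset u k = ⋂ j : Fin r, {x : EuclideanSpace ℝ (Fin d) | (j : ℕ) < k → ⟪x, u j⟫ = 0} := by
    ext x; simp [Sset]
  rw [h]
  refine MeasurableSet.iInter fun j => ?_
  by_cases hj : (j : ℕ) < k
  · simp only [hj, true_implies]
    exact (isClosed_eq (continuous_id.inner continuous_const) continuous_const).measurableSet
  · simp [hj]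

lemma Sset_zero (u : Fin r → EuclideanSpace ℝ (Fin d)) : Sset u 0 = Set.univ := by
  ext x; simp [Sset]

lemma Sset_top (u : Fin r → EuclideanSpace ℝ (Fin d)) :
    Sset u r = (Vred u : Set (EuclideanSpace ℝ (Fin d))) := by
  ext x
  constructor
  · intro hx
    show x ∈ (Submodule.span ℝ (Set.range u))ᗮ
    rw [Submodule.mem_orthogonal]
    intro v hv
    induction hv using Submodule.span_induction with
    | mem w hw =>
      obtain ⟨j, rfl⟩ := hw
      rw [real_inner_comm]
      exact hx j j.isLt
    | zero => simp
    | add a b _ _ ha hb => rw [inner_add_left, ha, hb, add_zero]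
    | smul c a _ ha => rw [real_inner_smul_left, ha, mul_zero]
  · intro hx j _
    have hj : u j ∈ Submodule.span ℝ (Set.range u) :=
      Submodule.subset_span (Set.mem_range_self j)
    have := (Submodule.mem_orthogonal _ x).1 hx (u j) hj
    rw [real_inner_comm] at this
    exact this

lemma ae_nonpos (μ : MeasureTheory.Measure (EuclideanSpace ℝ (Fin d)))
    [MeasureTheory.IsProbabilityMeasure μ] {u : Fin r → EuclideanSpace ℝ (Fin d)}
    (hadm : Admissible μ u) (k : Fin r) :
    ∀ᵐ y ∂μ, y ∈ Sset u (k : ℕ) → ⟪y, u k⟫ ≤ 0 := by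
  have hA : MeasurableSet {x : EuclideanSpace ℝ (Fin d) | ⟪x, u k⟫ ≤ 0} :=
    (isClosed_le (continuous_id.inner continuous_const) continuous_const).measurableSet
  have hset : {x : EuclideanSpace ℝ (Fin d) | ∀ j, j < k → ⟪x, u j⟫ = 0} = Sset u (k : ℕ) := by
    ext x
    constructor
    · intro hx j hj; exact hx j (Fin.lt_def.mpr hj)
    · intro hx j hj; exact hx j (Fin.lt_def.mp hj)
  have hm := hadm.2.2 k
  rw [hset] at hm
  have h1 := measure_inter_add_diff (μ := μ) (Sset u (k : ℕ)) hA
  rw [Set.inter_comm, hm] at h1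
  have h0 : μ (Sset u (k : ℕ) \ {x | ⟪x, u k⟫ ≤ 0}) = 0 := by
    have h2 : μ (Sset u (k : ℕ)) + μ (Sset u (k : ℕ) \ {x | ⟪x, u k⟫ ≤ 0})
        = μ (Sset u (k : ℕ)) + 0 := by rw [add_zero]; exact h1
    exact (ENNReal.add_right_inj (MeasureTheory.measure_ne_top μ _)).1 h2
  have h3 : ∀ᵐ y ∂μ, y ∉ Sset u (k : ℕ) \ {x | ⟪x, u k⟫ ≤ 0} :=
    MeasureTheory.measure_eq_zero_iff_ae_notMem.mp h0
  filter_upwards [h3] with y hy hyS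
  by_contra hcon
  exact hy ⟨hyS, hcon⟩

lemma Sset_succ {u : Fin r → EuclideanSpace ℝ (Fin d)} {k : ℕ} (hk : k < r) :
    Sset u (k + 1) = Sset u k ∩ {x : EuclideanSpace ℝ (Fin d) | ⟪x, u ⟨k, hk⟩⟫ = 0} := by
  ext x
  constructor
  · intro hx
    exact ⟨fun j hj => hx j (Nat.lt_succ_of_lt hj), hx ⟨k, hk⟩ (Nat.lt_succ_self k)⟩
  · rintro ⟨h1, h2⟩ j hj
    rcases Nat.lt_succ_iff_lt_or_eq.mp hj with h | h
    · exact h1 j h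
    · have hje : j = ⟨k, hk⟩ := Fin.ext h
      rw [hje]; exact h2

open MeasureTheory Filter in
lemma step_tendsto (μ : Measure (EuclideanSpace ℝ (Fin d))) [IsProbabilityMeasure μ]
    {u : Fin r → EuclideanSpace ℝ (Fin d)}
    (hexp : ∀ z : EuclideanSpace ℝ (Fin d), Integrable (fun y => Real.exp ⟪z, y⟫) μ)
    (hadm : Admissible μ u) {k : ℕ} (hk : k < r) (c : EuclideanSpace ℝ (Fin d)) :
    Tendsto (fun n : ℕ => ∫ y in Sset u k, Real.exp ⟪c + (n : ℝ) • u ⟨k, hk⟩, y⟫ ∂μ) atTop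
      (nhds (∫ y in Sset u (k + 1), Real.exp ⟪c, y⟫ ∂μ)) := by
  set uk := u ⟨k, hk⟩ with huk
  have hAmeas : MeasurableSet {x : EuclideanSpace ℝ (Fin d) | ⟪x, uk⟫ = 0} :=
    (isClosed_eq (continuous_id.inner continuous_const) continuous_const).measurableSet
  have hlimint : ∫ y in Sset u (k + 1), Real.exp ⟪c, y⟫ ∂μ
      = ∫ y in Sset u k,
          ({x : EuclideanSpace ℝ (Fin d) | ⟪x, uk⟫ = 0}).indicator
            (fun y => Real.exp ⟪c, y⟫) y ∂μ := by
    rw [setIntegral_indicator hAmeas, Sset_succ hk]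
  rw [hlimint]
  have haek : ∀ᵐ y ∂μ.restrict (Sset u k), ⟪y, uk⟫ ≤ 0 := by
    have h1 : ∀ᵐ y ∂μ.restrict (Sset u k), y ∈ Sset u k :=
      ae_restrict_mem (measurableSet_Sset u k)
    have h2 : ∀ᵐ y ∂μ.restrict (Sset u k), y ∈ Sset u k → ⟪y, uk⟫ ≤ 0 :=
      ae_restrict_of_ae (ae_nonpos μ hadm ⟨k, hk⟩)
    filter_upwards [h1, h2] with y hy h; exact h hy
  refine tendsto_integral_of_dominated_convergence (fun y => Real.exp ⟪c, y⟫)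
    (fun n => (Real.continuous_exp.comp (continuous_const.inner continuous_id)).aestronglyMeasurable)
    ((hexp c).restrict) ?_ ?_
  · intro n
    filter_upwards [haek] with y hy
    rw [Real.norm_eq_abs, abs_of_pos (Real.exp_pos _), inner_add_left, real_inner_smul_left,
      Real.exp_add]
    have hn0 : (n : ℝ) * ⟪uk, y⟫ ≤ 0 := by
      have : ⟪uk, y⟫ ≤ 0 := by rwa [real_inner_comm]
      exact mul_nonpos_of_nonneg_of_nonpos (Nat.cast_nonneg n) this
    calc Real.exp ⟪c, y⟫ * Real.exp ((n : ℝ) * ⟪uk, y⟫)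
        ≤ Real.exp ⟪c, y⟫ * 1 :=
          mul_le_mul_of_nonneg_left (Real.exp_le_one_iff.2 hn0) (Real.exp_pos _).le
      _ = Real.exp ⟪c, y⟫ := mul_one _
  · filter_upwards [haek] with y hy
    simp only [inner_add_left, real_inner_smul_left, Real.exp_add]
    rcases lt_or_eq_of_le hy with hlt | heq
    · have hnm : y ∉ {x : EuclideanSpace ℝ (Fin d) | ⟪x, uk⟫ = 0} := by
        simp only [Set.mem_setOf_eq]; exact hlt.ne
      rw [Set.indicator_of_notMem hnm]
      have hlim : Tendsto (fun n : ℕ => Real.exp ((n : ℝ) * ⟪uk, y⟫)) atTop (nhds 0) := by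
        apply Real.tendsto_exp_atBot.comp
        have : ⟪uk, y⟫ < 0 := by rwa [real_inner_comm]
        exact Tendsto.atTop_mul_const_of_neg this tendsto_natCast_atTop_atTop
      have := tendsto_const_nhds (α := ℕ) (x := Real.exp ⟪c, y⟫) |>.mul hlim
      simpa using this
    · have hmem : y ∈ {x : EuclideanSpace ℝ (Fin d) | ⟪x, uk⟫ = 0} := by
        simp only [Set.mem_setOf_eq, real_inner_comm]; exact heq
      rw [Set.indicator_of_mem hmem]
      have hz : ⟪uk, y⟫ = 0 := by rw [real_inner_comm]; exact heq
      simp [hz]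

open MeasureTheory Filter in
lemma claim (μ : Measure (EuclideanSpace ℝ (Fin d))) [IsProbabilityMeasure μ]
    {u : Fin r → EuclideanSpace ℝ (Fin d)}
    (hexp : ∀ z : EuclideanSpace ℝ (Fin d), Integrable (fun y => Real.exp ⟪z, y⟫) μ)
    (hadm : Admissible μ u) (b : EuclideanSpace ℝ (Fin d)) :
    ∀ m : ℕ, ∀ ε : ℝ, 0 < ε → ∃ w ∈ Qpos d,
      ∫ y in Sset u (r - m), Real.exp ⟪b + w, y⟫ ∂μ
        ≤ ∫ y in Sset u r, Real.exp ⟪b, y⟫ ∂μ + ε := by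
  intro m
  induction m with
  | zero =>
    intro ε hε
    refine ⟨0, fun i => le_of_eq rfl, ?_⟩
    simp only [add_zero, Nat.sub_zero]
    linarith
  | succ m ih =>
    intro ε hε
    by_cases hrm : r ≤ m
    · have h : r - (m + 1) = r - m := by omega
      rw [h]; exact ih ε hε
    · push_neg at hrm
      set k := r - (m + 1) with hkdef
      have hk : k < r := by omega
      have hk1 : k + 1 = r - m := by omega
      obtain ⟨w', hw', hle'⟩ := ih (ε / 2) (by linarith)
      have htd := step_tendsto μ hexp hadm hk (b + w')
      have hev : ∀ᶠ n : ℕ in atTop,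
          ∫ y in Sset u k, Real.exp ⟪b + w' + (n : ℝ) • u ⟨k, hk⟩, y⟫ ∂μ
            ≤ ∫ y in Sset u (k + 1), Real.exp ⟪b + w', y⟫ ∂μ + ε / 2 :=
        htd.eventually (eventually_le_nhds (by linarith))
      obtain ⟨n, hn⟩ := hev.exists
      refine ⟨w' + (n : ℝ) • u ⟨k, hk⟩, ?_, ?_⟩
      · intro i
        have h1 := hw' i
        have h2 := hadm.1 ⟨k, hk⟩ i
        have hcalc : (w' + (n : ℝ) • u ⟨k, hk⟩) i = w' i + (n : ℝ) * u ⟨k, hk⟩ i := rfl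
        rw [hcalc]
        positivity
      · have hassoc : b + (w' + (n : ℝ) • u ⟨k, hk⟩) = b + w' + (n : ℝ) • u ⟨k, hk⟩ :=
          (add_assoc b w' _).symm
        rw [hassoc]
        rw [hk1] at hn
        calc ∫ y in Sset u k, Real.exp ⟪b + w' + (n : ℝ) • u ⟨k, hk⟩, y⟫ ∂μ
            ≤ ∫ y in Sset u (r - m), Real.exp ⟪b + w', y⟫ ∂μ + ε / 2 := hn
          _ ≤ (∫ y in Sset u r, Real.exp ⟪b, y⟫ ∂μ + ε / 2) + ε / 2 := by linarith
          _ = ∫ y in Sset u r, Real.exp ⟪b, y⟫ ∂μ + ε := by ring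

end Stmt3Aux
/-- `inf_{z∈Q} L_μ(z) = inf_{v ∈ V^+} ∫_V exp⟨v,y⟩ dμ(y)`. -/
theorem stmt3 (d : ℕ) (hd : 1 ≤ d)
    (μ : Measure (EuclideanSpace ℝ (Fin d))) [IsProbabilityMeasure μ]
    (hexp : ∀ z : EuclideanSpace ℝ (Fin d), Integrable (fun y => Real.exp ⟪z, y⟫) μ)
    {r : ℕ} (hr : 1 ≤ r) (u : Fin r → EuclideanSpace ℝ (Fin d))
    (hu : MaximalAdmissible μ u) :
    sInf (laplace μ '' Qpos d) =
      sInf ((fun v => ∫ y in (Vred u : Set (EuclideanSpace ℝ (Fin d))), Real.exp ⟪v, y⟫ ∂μ) ''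
        Vplus u) := by
  classical
  obtain ⟨hadm, -⟩ := hu
  have hVmeas : MeasurableSet ((Vred u : Set (EuclideanSpace ℝ (Fin d)))) :=
    (Submodule.closed_of_finiteDimensional (Vred u)).measurableSet
  set g : EuclideanSpace ℝ (Fin d) → ℝ :=
    fun v => ∫ y in (Vred u : Set (EuclideanSpace ℝ (Fin d))), Real.exp ⟪v, y⟫ ∂μ with hg
  -- Step 1: every point of the LHS set dominates some point of the RHS set.
  have step1 : ∀ z ∈ Qpos d, ∃ v ∈ Vplus u, g v ≤ laplace μ z := by
    intro z hz
    set K := Vred u with hK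
    set v : EuclideanSpace ℝ (Fin d) :=
      (Submodule.orthogonalProjection K z : EuclideanSpace ℝ (Fin d)) with hv
    have hvK : v ∈ K := (Submodule.orthogonalProjection K z).2
    have hhK : z - v ∈ Kᗮ := Submodule.sub_starProjection_mem_orthogonal (K := K) z
    refine ⟨v, ⟨hvK, z - v, hhK, by simpa using hz⟩, ?_⟩
    have heq : Set.EqOn (fun y => Real.exp ⟪v, y⟫) (fun y => Real.exp ⟪z, y⟫)
        (K : Set (EuclideanSpace ℝ (Fin d))) := by
      intro y hy
      have h0 : ⟪y, z - v⟫ = 0 := (Submodule.mem_orthogonal K (z - v)).1 hhK y hy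
      have h0' : ⟪z - v, y⟫ = 0 := by rwa [real_inner_comm]
      have h2 : ⟪z - v, y⟫ = ⟪z, y⟫ - ⟪v, y⟫ := inner_sub_left z v y
      have h1 : ⟪v, y⟫ = ⟪z, y⟫ := by
        rw [h2] at h0'; linarith
      simp only [h1]
    calc g v = ∫ y in (K : Set (EuclideanSpace ℝ (Fin d))), Real.exp ⟪z, y⟫ ∂μ :=
          setIntegral_congr_fun hVmeas heq
      _ ≤ ∫ y, Real.exp ⟪z, y⟫ ∂μ :=
          setIntegral_le_integral (hexp z) (Filter.Eventually.of_forall fun y => (Real.exp_pos _).le)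
      _ = laplace μ z := rfl
  -- Step 2: every point of the RHS set is approximated from above by points of the LHS set.
  have step2 : ∀ v ∈ Vplus u, ∀ ε : ℝ, 0 < ε → ∃ z ∈ Qpos d, laplace μ z ≤ g v + ε := by
    rintro v ⟨hvV, h, hh, hq⟩ ε hε
    obtain ⟨w, hw, hle⟩ := Stmt3Aux.claim μ hexp hadm (v + h) r ε hε
    refine ⟨v + h + w, ?_, ?_⟩
    · intro i
      have hi : (v + h + w) i = (v + h) i + w i := rfl
      rw [hi]
      have := hq i
      have := hw i
      linarith
    · have hS0 : Stmt3Aux.Sset u (r - r) = Set.univ := by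
        rw [Nat.sub_self]; exact Stmt3Aux.Sset_zero u
      have hL : laplace μ (v + h + w)
          = ∫ y in Stmt3Aux.Sset u (r - r), Real.exp ⟪v + h + w, y⟫ ∂μ := by
        rw [hS0, Measure.restrict_univ]; rfl
      have hVr : ∫ y in Stmt3Aux.Sset u r, Real.exp ⟪v + h, y⟫ ∂μ = g v := by
        rw [Stmt3Aux.Sset_top]
        refine setIntegral_congr_fun hVmeas ?_
        intro y hy
        have h0 : ⟪y, h⟫ = 0 := (Submodule.mem_orthogonal (Vred u) h).1 hh y hy
        have h0' : ⟪h, y⟫ = 0 := by rwa [real_inner_comm]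
        simp only [inner_add_left, h0', add_zero]
      rw [hL]
      calc ∫ y in Stmt3Aux.Sset u (r - r), Real.exp ⟪v + h + w, y⟫ ∂μ
          ≤ ∫ y in Stmt3Aux.Sset u r, Real.exp ⟪v + h, y⟫ ∂μ + ε := hle
        _ = g v + ε := by rw [hVr]
  -- Assembling.
  have bddL : BddBelow (laplace μ '' Qpos d) := by
    refine ⟨0, ?_⟩
    rintro a ⟨z, hz, rfl⟩
    exact integral_nonneg fun y => (Real.exp_pos _).le
  have bddR : BddBelow (g '' Vplus u) := by
    refine ⟨0, ?_⟩
    rintro a ⟨v, hv, rfl⟩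
    exact integral_nonneg fun y => (Real.exp_pos _).le
  have hQ0 : (0 : EuclideanSpace ℝ (Fin d)) ∈ Qpos d := by
    intro i; simp
  obtain ⟨v0, hv0, -⟩ := step1 0 hQ0
  apply le_antisymm
  · refine le_csInf ⟨g v0, v0, hv0, rfl⟩ ?_
    rintro bb ⟨v, hv, rfl⟩
    refine le_of_forall_pos_le_add fun ε hε => ?_
    obtain ⟨z, hz, hle⟩ := step2 v hv ε hε
    exact le_trans (csInf_le bddL ⟨z, hz, rfl⟩) hle
  · refine le_csInf ⟨laplace μ 0, 0, hQ0, rfl⟩ ?_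
    rintro a ⟨z, hz, rfl⟩
    obtain ⟨v, hv, hle⟩ := step1 z hz
    exact le_trans (csInf_le bddR ⟨v, hv, rfl⟩) hle
end
end

section
/- Assume inf_{z∈Q} L_μ(z) > 0. Then μ(V) > 0, and for every v ∈ V^+ with ‖v‖ = 1 one has μ(v^- ∩ V) < μ(V). -/
open MeasureTheory Filter
open scoped RealInnerProductSpace Topology

noncomputable section

private lemma mem_Vred_iff {d r : ℕ} (u : Fin r → EuclideanSpace ℝ (Fin d))
    (x : EuclideanSpace ℝ (Fin d)) : x ∈ Vred u ↔ ∀ j, ⟪x, u j⟫ = 0 := by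
  constructor
  · intro hx j
    rw [real_inner_comm]
    exact hx (u j) (Submodule.subset_span ⟨j, rfl⟩)
  · intro hx w hw
    induction hw using Submodule.span_induction with
    | mem w hw => obtain ⟨j, rfl⟩ := hw; rw [real_inner_comm]; exact hx j
    | zero => simp
    | add a b _ _ ha hb => rw [inner_add_left, ha, hb, add_zero]
    | smul c a _ ha => rw [inner_smul_left, ha, mul_zero]

private lemma orth_orth {d r : ℕ} (u : Fin r → EuclideanSpace ℝ (Fin d)) :
    (Vred u)ᗮ = Submodule.span ℝ (Set.range u) :=
  Submodule.orthogonal_orthogonal _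

private lemma key {d r : ℕ} (μ : Measure (EuclideanSpace ℝ (Fin d))) [IsProbabilityMeasure μ]
    (hexp : ∀ z : EuclideanSpace ℝ (Fin d), Integrable (fun y => Real.exp ⟪z, y⟫) μ)
    (u : Fin r → EuclideanSpace ℝ (Fin d)) (huQ : ∀ k, u k ∈ Qpos d)
    (hadm : ∀ k : Fin r,
      μ ({x | ⟪x, u k⟫ ≤ 0} ∩ {x | ∀ j, j < k → ⟪x, u j⟫ = 0}) =
        μ {x | ∀ j, j < k → ⟪x, u j⟫ = 0}) :
    ∀ k, k ≤ r → ∀ z ∈ Qpos d,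
      sInf (laplace μ '' Qpos d) ≤
        ∫ y in {x | ∀ j : Fin r, (j : ℕ) < k → ⟪x, u j⟫ = 0}, Real.exp ⟪z, y⟫ ∂μ := by
  intro k
  induction k with
  | zero =>
    intro _ z hz
    have h0 : {x : EuclideanSpace ℝ (Fin d) | ∀ j : Fin r, (j:ℕ) < 0 → ⟪x, u j⟫ = 0}
        = Set.univ := by ext x; simp
    rw [h0, Measure.restrict_univ]
    refine csInf_le ⟨0, ?_⟩ ⟨z, hz, rfl⟩
    rintro w ⟨a, ha, rfl⟩
    exact integral_nonneg fun y => (Real.exp_pos _).le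
  | succ k ih =>
    intro hk z hz
    have hkr : k < r := hk
    set kf : Fin r := ⟨k, hkr⟩ with hkf
    set S : Set (EuclideanSpace ℝ (Fin d)) :=
      {x | ∀ j : Fin r, (j:ℕ) < k → ⟪x, u j⟫ = 0} with hS
    have hSclosed : IsClosed S := by
      have : S = ⋂ (j : Fin r) (_ : (j:ℕ) < k), {x | ⟪x, u j⟫ = 0} := by
        ext x; simp [hS, Set.mem_iInter]
      rw [this]
      exact isClosed_iInter fun j => isClosed_iInter fun _ =>
        isClosed_eq (continuous_id.inner continuous_const) continuous_const
    have hSm : MeasurableSet S := hSclosed.measurableSet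
    have hHm : MeasurableSet {x : EuclideanSpace ℝ (Fin d) | ⟪x, u kf⟫ = 0} :=
      (isClosed_eq (continuous_id.inner continuous_const) continuous_const).measurableSet
    have hAm : MeasurableSet {x : EuclideanSpace ℝ (Fin d) | ⟪x, u kf⟫ ≤ 0} :=
      (isClosed_le (continuous_id.inner continuous_const) continuous_const).measurableSet
    have hsets : {x : EuclideanSpace ℝ (Fin d) | ∀ j, j < kf → ⟪x, u j⟫ = 0} = S := by
      ext x; simp only [Set.mem_setOf_eq, hS, Fin.lt_def, hkf]
    have hadm' := hadm kf
    rw [hsets] at hadm'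
    -- a.e. nonpositivity on S
    have hae : ∀ᵐ y ∂ μ.restrict S, ⟪y, u kf⟫ ≤ 0 := by
      have hdiff : μ (S \ {x | ⟪x, u kf⟫ ≤ 0}) = 0 := by
        have h1 : μ (S ∩ {x | ⟪x, u kf⟫ ≤ 0}) + μ (S \ {x | ⟪x, u kf⟫ ≤ 0}) = μ S :=
          measure_inter_add_diff S hAm
        rw [Set.inter_comm, hadm'] at h1
        have hfin : μ S ≠ ⊤ := measure_ne_top μ S
        have h2 : μ S + μ (S \ {x | ⟪x, u kf⟫ ≤ 0}) = μ S + 0 := by rw [add_zero]; exact h1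
        exact (ENNReal.add_right_inj hfin).mp h2
      rw [ae_restrict_iff' hSm]
      filter_upwards [measure_eq_zero_iff_ae_notMem.mp hdiff] with y hy hyS
      by_contra hc
      exact hy ⟨hyS, hc⟩
    -- dominated convergence
    have hmain : Tendsto (fun n : ℕ => ∫ y in S, Real.exp ⟪z + (n:ℝ) • u kf, y⟫ ∂μ) atTop
        (𝓝 (∫ y in S,
          Set.indicator {x | ⟪x, u kf⟫ = 0} (fun y => Real.exp ⟪z, y⟫) y ∂μ)) := by
      apply tendsto_integral_of_dominated_convergence (fun y => Real.exp ⟪z, y⟫)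
      · exact fun n => ((hexp (z + (n:ℝ) • u kf)).restrict (s := S)).aestronglyMeasurable
      · exact (hexp z).restrict
      · intro n
        filter_upwards [hae] with y hy
        rw [Real.norm_eq_abs, abs_of_pos (Real.exp_pos _), inner_add_left,
          real_inner_smul_left, Real.exp_le_exp]
        have : ⟪u kf, y⟫ ≤ 0 := by rw [real_inner_comm]; exact hy
        nlinarith [Nat.cast_nonneg (α := ℝ) n]
      · filter_upwards [hae] with y hy
        rcases lt_or_eq_of_le hy with h | h
        · have hne : y ∉ {x : EuclideanSpace ℝ (Fin d) | ⟪x, u kf⟫ = 0} := by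
            simp only [Set.mem_setOf_eq]; exact ne_of_lt h
          rw [Set.indicator_of_notMem hne]
          have hlt : Real.exp ⟪u kf, y⟫ < 1 := by
            rw [Real.exp_lt_one_iff, real_inner_comm]; exact h
          have h2 : Tendsto (fun n : ℕ => Real.exp ⟪z, y⟫ * Real.exp ⟪u kf, y⟫ ^ n)
              atTop (𝓝 (Real.exp ⟪z, y⟫ * 0)) :=
            (tendsto_pow_atTop_nhds_zero_of_lt_one (Real.exp_nonneg _) hlt).const_mul _
          rw [mul_zero] at h2
          refine h2.congr fun n => ?_
          rw [inner_add_left, real_inner_smul_left, Real.exp_add, ← Real.exp_nat_mul]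
        · have hmem : y ∈ {x : EuclideanSpace ℝ (Fin d) | ⟪x, u kf⟫ = 0} := by
            simp only [Set.mem_setOf_eq]; exact h
          rw [Set.indicator_of_mem hmem]
          refine tendsto_const_nhds.congr fun n => ?_
          have h' : (⟪u kf, y⟫ : ℝ) = 0 := by rw [real_inner_comm]; exact h
          rw [inner_add_left, real_inner_smul_left, h', mul_zero, add_zero]
    have hind : ∫ y in S,
        Set.indicator {x | ⟪x, u kf⟫ = 0} (fun y => Real.exp ⟪z, y⟫) y ∂μ
        = ∫ y in {x | ∀ j : Fin r, (j:ℕ) < k + 1 → ⟪x, u j⟫ = 0}, Real.exp ⟪z, y⟫ ∂μ := by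
      rw [integral_indicator hHm, Measure.restrict_restrict hHm]
      have hseteq : {x : EuclideanSpace ℝ (Fin d) | ⟪x, u kf⟫ = 0} ∩ S
          = {x : EuclideanSpace ℝ (Fin d) | ∀ j : Fin r, (j:ℕ) < k + 1 → ⟪x, u j⟫ = 0} := by
        ext x
        simp only [Set.mem_inter_iff, Set.mem_setOf_eq, hS]
        constructor
        · rintro ⟨h0, hSx⟩ j hj
          rcases Nat.lt_succ_iff_lt_or_eq.1 hj with h | h
          · exact hSx j h
          · have : j = kf := Fin.ext h
            rw [this]; exact h0
        · intro hx
          exact ⟨hx kf (Nat.lt_succ_self k), fun j hj => hx j (Nat.lt_succ_of_lt hj)⟩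
      rw [hseteq]
    rw [← hind]
    refine ge_of_tendsto hmain (Eventually.of_forall fun n => ?_)
    refine ih hkr.le (z + (n:ℝ) • u kf) fun i => ?_
    have h1 := hz i
    have h2 := huQ kf i
    have : (z + (n:ℝ) • u kf) i = z i + (n:ℝ) * u kf i := rfl
    rw [this]
    positivity

/-- If `inf_Q L_μ > 0`, then `μ(V) > 0` and for every unit vector `v ∈ V^+`,
`μ(v^- ∩ V) < μ(V)`. -/
theorem stmt4 (d : ℕ) (hd : 1 ≤ d)
    (μ : Measure (EuclideanSpace ℝ (Fin d))) [IsProbabilityMeasure μ]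
    (hexp : ∀ z : EuclideanSpace ℝ (Fin d), Integrable (fun y => Real.exp ⟪z, y⟫) μ)
    {r : ℕ} (hr : 1 ≤ r) (u : Fin r → EuclideanSpace ℝ (Fin d))
    (hu : MaximalAdmissible μ u)
    (hinf : 0 < sInf (laplace μ '' Qpos d)) :
    0 < μ (Vred u : Set (EuclideanSpace ℝ (Fin d))) ∧
      ∀ v ∈ Vplus u, ‖v‖ = 1 →
        μ ({x | ⟪x, v⟫ ≤ 0} ∩ (Vred u : Set (EuclideanSpace ℝ (Fin d)))) <
          μ (Vred u : Set (EuclideanSpace ℝ (Fin d))) := by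
  obtain ⟨⟨huQ, hulin, hadm⟩, hmax⟩ := hu
  have hVset : (Vred u : Set (EuclideanSpace ℝ (Fin d)))
      = {x | ∀ j : Fin r, ⟪x, u j⟫ = 0} := by
    ext x; exact mem_Vred_iff u x
  have h0Q : (0 : EuclideanSpace ℝ (Fin d)) ∈ Qpos d := by
    intro i; simp [Qpos]
  have hkey := key μ hexp u huQ hadm r le_rfl 0 h0Q
  have hset : {x : EuclideanSpace ℝ (Fin d) | ∀ j : Fin r, (j:ℕ) < r → ⟪x, u j⟫ = 0}
      = (Vred u : Set (EuclideanSpace ℝ (Fin d))) := by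
    rw [hVset]; ext x
    exact ⟨fun hx j => hx j j.isLt, fun hx j _ => hx j⟩
  rw [hset] at hkey
  have h1 : ∫ y in (Vred u : Set (EuclideanSpace ℝ (Fin d))),
      Real.exp ⟪(0 : EuclideanSpace ℝ (Fin d)), y⟫ ∂μ
      = (μ (Vred u : Set (EuclideanSpace ℝ (Fin d)))).toReal := by
    simp [inner_zero_left, Measure.real]
  rw [h1] at hkey
  have hpos : 0 < μ (Vred u : Set (EuclideanSpace ℝ (Fin d))) :=
    (ENNReal.toReal_pos_iff.mp (lt_of_lt_of_le hinf hkey)).1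
  refine ⟨hpos, ?_⟩
  rintro v ⟨hvV, h, hh, hwQ⟩ hnorm
  by_contra hcon
  push_neg at hcon
  have heq : μ ({x | ⟪x, v⟫ ≤ 0} ∩ (Vred u : Set (EuclideanSpace ℝ (Fin d))))
      = μ (Vred u : Set (EuclideanSpace ℝ (Fin d))) :=
    le_antisymm (measure_mono Set.inter_subset_right) hcon
  apply hmax (v + h) hwQ
  have hspan : h ∈ Submodule.span ℝ (Set.range u) := by rw [← orth_orth]; exact hh
  have hxh : ∀ x ∈ Vred u, ⟪x, h⟫ = 0 := fun x hx =>
    (Submodule.mem_orthogonal _ _).mp hh x hx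
  have setLast : {x : EuclideanSpace ℝ (Fin d) |
      ∀ j : Fin (r+1), j < Fin.last r → ⟪x, (Fin.snoc u (v + h) : Fin (r+1) → EuclideanSpace ℝ (Fin d)) j⟫ = 0}
      = (Vred u : Set (EuclideanSpace ℝ (Fin d))) := by
    rw [hVset]; ext x
    simp only [Set.mem_setOf_eq]
    constructor
    · intro hx i
      have := hx i.castSucc (Fin.castSucc_lt_last i)
      rwa [Fin.snoc_castSucc] at this
    · intro hx j hj
      refine Fin.lastCases ?_ (fun i => ?_) j hj
      · intro hj'; exact absurd hj' (lt_irrefl _)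
      · intro _; rw [Fin.snoc_castSucc]; exact hx i
  refine ⟨?_, ?_, ?_⟩
  · intro k
    refine Fin.lastCases ?_ (fun i => ?_) k
    · rw [Fin.snoc_last]; exact hwQ
    · rw [Fin.snoc_castSucc]; exact huQ i
  · rw [linearIndependent_fin_snoc]
    refine ⟨hulin, fun hmem => ?_⟩
    have hvspan : v ∈ Submodule.span ℝ (Set.range u) := by
      have := Submodule.sub_mem _ hmem hspan
      simpa using this
    rw [← orth_orth u] at hvspan
    have hv0 : v = 0 :=
      inner_self_eq_zero.mp ((Submodule.mem_orthogonal _ _).mp hvspan v hvV)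
    rw [hv0] at hnorm
    simp at hnorm
  · intro k
    refine Fin.lastCases ?_ (fun j => ?_) k
    · have hint : {x : EuclideanSpace ℝ (Fin d) | ⟪x, (Fin.snoc u (v + h) : Fin (r+1) → EuclideanSpace ℝ (Fin d)) (Fin.last r)⟫ ≤ 0}
          ∩ {x | ∀ j : Fin (r+1), j < Fin.last r → ⟪x, (Fin.snoc u (v + h) : Fin (r+1) → EuclideanSpace ℝ (Fin d)) j⟫ = 0}
          = {x | ⟪x, v⟫ ≤ 0} ∩ (Vred u : Set (EuclideanSpace ℝ (Fin d))) := by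
        rw [setLast]
        ext x
        simp only [Set.mem_inter_iff, Set.mem_setOf_eq, Fin.snoc_last]
        constructor
        · rintro ⟨hx1, hx2⟩
          refine ⟨?_, hx2⟩
          rwa [inner_add_right, hxh x hx2, add_zero] at hx1
        · rintro ⟨hx1, hx2⟩
          refine ⟨?_, hx2⟩
          rwa [inner_add_right, hxh x hx2, add_zero]
      rw [hint, setLast, heq]
    · have set1 : {x : EuclideanSpace ℝ (Fin d) |
          ∀ j' : Fin (r+1), j' < Fin.castSucc j → ⟪x, (Fin.snoc u (v + h) : Fin (r+1) → EuclideanSpace ℝ (Fin d)) j'⟫ = 0}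
          = {x | ∀ i : Fin r, i < j → ⟪x, u i⟫ = 0} := by
        ext x
        simp only [Set.mem_setOf_eq]
        constructor
        · intro hx i hij
          have := hx i.castSucc (by rwa [Fin.castSucc_lt_castSucc_iff])
          rwa [Fin.snoc_castSucc] at this
        · intro hx j' hj'
          refine Fin.lastCases ?_ (fun i => ?_) j' hj'
          · intro hj''
            exact absurd (hj''.trans (Fin.castSucc_lt_last j)) (lt_irrefl _)
          · intro hj''
            rw [Fin.snoc_castSucc]
            exact hx i (Fin.castSucc_lt_castSucc_iff.mp hj'')
      have set2 : {x : EuclideanSpace ℝ (Fin d) | ⟪x, (Fin.snoc u (v + h) : Fin (r+1) → EuclideanSpace ℝ (Fin d)) (Fin.castSucc j)⟫ ≤ 0}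
          = {x | ⟪x, u j⟫ ≤ 0} := by
        ext x; simp only [Set.mem_setOf_eq, Fin.snoc_castSucc]
      rw [set1, set2]
      exact hadm j
end
end

section
/- Assume inf_{z∈Q} L_μ(z) > 0, so that μ(V) > 0, and let μ|V be the conditional distribution μ|V(A) = μ(A ∩ V)/μ(V). Then the Laplace transform L_{μ|V} attains a global minimum on V^+, i.e. there exists v_0 ∈ V^+ with L_{μ|V}(v_0) = inf_{v∈V^+} L_{μ|V}(v), and moreover inf_{z∈Q} L_μ(z) = μ(V) · L_{μ|V}(v_0). -/
open MeasureTheory Filter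
open scoped RealInnerProductSpace

noncomputable section

open Set Topology

lemma coneFin_closed {E : Type*} [NormedAddCommGroup E] [NormedSpace ℝ E]
    [FiniteDimensional ℝ E] :
    ∀ (n : ℕ) (b : Fin n → E),
      IsClosed {x : E | ∃ c : Fin n → ℝ, (∀ i, 0 ≤ c i) ∧ ∑ i, c i • b i = x} := by
  intro n
  induction n with
  | zero =>
      intro b
      convert isClosed_singleton (x := (0 : E)) using 1
      ext x
      simp [eq_comm]
  | succ n ih =>
      intro b
      by_cases hli : LinearIndependent ℝ b
      · -- image of the closed orthant under a closed embedding
        let T : (Fin (n+1) → ℝ) →ₗ[ℝ] E := Fintype.linearCombination ℝ b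
        have hT : LinearMap.ker T = ⊥ := by
          rw [LinearMap.ker_eq_bot']
          intro c hc
          funext i
          exact Fintype.linearIndependent_iff.mp hli c
            (by simpa [T, Fintype.linearCombination_apply] using hc) i
        have hc : IsClosedEmbedding T := T.isClosedEmbedding_of_injective hT
        have hK : IsClosed {c : Fin (n+1) → ℝ | ∀ i, 0 ≤ c i} := by
          have : {c : Fin (n+1) → ℝ | ∀ i, 0 ≤ c i} = ⋂ i, {c | 0 ≤ c i} := by
            ext c; simp
          rw [this]
          exact isClosed_iInter fun i =>
            isClosed_le continuous_const (continuous_apply i)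
        have him : {x : E | ∃ c : Fin (n+1) → ℝ, (∀ i, 0 ≤ c i) ∧ ∑ i, c i • b i = x}
            = T '' {c | ∀ i, 0 ≤ c i} := by
          ext x
          constructor
          · rintro ⟨c, hc0, rfl⟩
            exact ⟨c, hc0, by simp [T, Fintype.linearCombination_apply]⟩
          · rintro ⟨c, hc0, rfl⟩
            exact ⟨c, hc0, by simp [T, Fintype.linearCombination_apply]⟩
        rw [him]
        exact hc.isClosedMap _ hK
      · -- dependent: reduce to cones on n generators
        have key : ∀ (g : Fin (n+1) → ℝ), (∑ i, g i • b i = 0) → ∀ i₀, 0 < g i₀ →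
            {x : E | ∃ c : Fin (n+1) → ℝ, (∀ i, 0 ≤ c i) ∧ ∑ i, c i • b i = x}
              = ⋃ i : Fin (n+1), (if 0 < g i then
                  {x : E | ∃ c : Fin n → ℝ, (∀ j, 0 ≤ c j) ∧
                    ∑ j, c j • (b ∘ i.succAbove) j = x} else ∅) := by
          intro g hgsum i₀ hi₀
          ext x
          simp only [mem_setOf_eq, mem_iUnion]
          constructor
          · rintro ⟨c, hc0, rfl⟩
            obtain ⟨i₁, hi₁pos, hi₁min⟩ :
                ∃ i₁, 0 < g i₁ ∧ ∀ j, 0 < g j → c i₁ / g i₁ ≤ c j / g j := by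
              classical
              obtain ⟨i₁, hmem, hmin⟩ :=
                (Finset.univ.filter fun j => 0 < g j).exists_min_image
                  (fun j => c j / g j) ⟨i₀, by simp [hi₀]⟩
              exact ⟨i₁, (Finset.mem_filter.mp hmem).2,
                fun j hj => hmin j (by simp [hj])⟩
            set t := c i₁ / g i₁ with ht
            have ht0 : 0 ≤ t := div_nonneg (hc0 i₁) hi₁pos.le
            refine ⟨i₁, ?_⟩
            rw [if_pos hi₁pos]
            have hnn : ∀ k, 0 ≤ (c - t • g) k := by
              intro k
              by_cases hgk : 0 < g k
              · have h1 := hi₁min k hgk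
                have h2 : c i₁ * g k ≤ c k * g i₁ := (div_le_div_iff₀ hi₁pos hgk).mp h1
                have h3 : t * g k ≤ c k := by
                  rw [ht, div_mul_eq_mul_div, div_le_iff₀ hi₁pos]
                  nlinarith
                simp only [Pi.sub_apply, Pi.smul_apply, smul_eq_mul]
                linarith
              · push_neg at hgk
                have h3 : t * g k ≤ 0 := mul_nonpos_of_nonneg_of_nonpos ht0 hgk
                have := hc0 k
                simp only [Pi.sub_apply, Pi.smul_apply, smul_eq_mul]
                linarith
            refine ⟨fun j => (c - t • g) (i₁.succAbove j), fun j => hnn _, ?_⟩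
            have hsum : ∑ i, (c - t • g) i • b i = ∑ i, c i • b i := by
              simp only [Pi.sub_apply, Pi.smul_apply, smul_eq_mul, sub_smul, mul_smul]
              rw [Finset.sum_sub_distrib, ← Finset.smul_sum, hgsum, smul_zero, sub_zero]
            have hzero : (c - t • g) i₁ = 0 := by
              simp only [Pi.sub_apply, Pi.smul_apply, smul_eq_mul, ht]
              field_simp
              ring
            rw [← hsum, Fin.sum_univ_succAbove (fun i => (c - t • g) i • b i) i₁,
              hzero, zero_smul, zero_add]
            rfl
          · rintro ⟨i, hx⟩
            by_cases hgp : 0 < g i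
            · rw [if_pos hgp] at hx
              obtain ⟨c, hc0, rfl⟩ := hx
              refine ⟨Fin.insertNth (α := fun _ => ℝ) i 0 c, ?_, ?_⟩
              · intro k
                by_cases hk : k = i
                · subst hk; simp
                · obtain ⟨j, rfl⟩ := Fin.exists_succAbove_eq (Ne.symm (Ne.intro hk)).symm
                  rw [Fin.insertNth_apply_succAbove]
                  exact hc0 j
              · rw [Fin.sum_univ_succAbove (fun k => Fin.insertNth (α := fun _ => ℝ) i 0 c k • b k) i]
                simp [Fin.insertNth_apply_same, Fin.insertNth_apply_succAbove]
            · rw [if_neg hgp] at hx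
              exact absurd hx (notMem_empty x)
        obtain ⟨g, hg, i₀, hgi⟩ := Fintype.not_linearIndependent_iff.mp hli
        rcases lt_or_gt_of_ne hgi with hneg | hpos
        · rw [key (-g) (by simpa using hg) i₀ (by simpa using hneg)]
          exact isClosed_iUnion_of_finite fun i => by
            split
            · exact ih _
            · exact isClosed_empty
        · rw [key g hg i₀ hpos]
          exact isClosed_iUnion_of_finite fun i => by
            split
            · exact ih _
            · exact isClosed_empty


section Geom

variable {d r : ℕ} (u : Fin r → EuclideanSpace ℝ (Fin d))

lemma inner_pi (x y : EuclideanSpace ℝ (Fin d)) : ⟪x, y⟫ = ∑ i, x i * y i := by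
  simp [PiLp.inner_apply, RCLike.inner_apply, conj_trivial, mul_comm]

lemma mem_vred_iff (x : EuclideanSpace ℝ (Fin d)) :
    x ∈ Vred u ↔ ∀ j, ⟪u j, x⟫ = 0 := by
  rw [Vred, Submodule.mem_orthogonal]
  constructor
  · intro hx j
    exact hx _ (Submodule.subset_span (Set.mem_range_self j))
  · intro h v hv
    induction hv using Submodule.span_induction with
    | mem v hv => obtain ⟨j, rfl⟩ := hv; exact h j
    | zero => simp
    | add v w _ _ hv hw => rw [inner_add_left, hv, hw, add_zero]
    | smul a v _ hv => rw [inner_smul_left, hv, mul_zero]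

lemma euclid_decomp (x : EuclideanSpace ℝ (Fin d)) :
    ∑ i, x i • EuclideanSpace.single i (1:ℝ) = x := by
  ext j
  rw [WithLp.ofLp_sum, Finset.sum_apply j Finset.univ _]
  simp [EuclideanSpace.single_apply]

lemma vplus_eq_cone :
    Vplus u = {x : EuclideanSpace ℝ (Fin d) | ∃ c : Fin d → ℝ, (∀ i, 0 ≤ c i) ∧
      ∑ i, c i • ((Submodule.orthogonalProjectionOnto (Vred u) (EuclideanSpace.single i (1:ℝ)) :
        EuclideanSpace ℝ (Fin d))) = x} := by
  ext x
  constructor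
  · rintro ⟨hxV, h, hh, hq⟩
    refine ⟨fun i => (x + h) i, fun i => hq i, ?_⟩
    have hP : (Submodule.orthogonalProjectionOnto (Vred u) (x + h) : EuclideanSpace ℝ (Fin d)) = x := by
      rw [map_add, Submodule.orthogonalProjectionOnto_mem_subspace_eq_self ⟨x, hxV⟩,
        Submodule.orthogonalProjectionOnto_apply_of_mem_orthogonal hh]
      simp
    calc ∑ i, (x + h) i • ((Submodule.orthogonalProjectionOnto (Vred u) (EuclideanSpace.single i (1:ℝ)) :
            EuclideanSpace ℝ (Fin d)))
        = (Submodule.orthogonalProjectionOnto (Vred u) (∑ i, (x + h) i • EuclideanSpace.single i (1:ℝ)) :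
            EuclideanSpace ℝ (Fin d)) := by
          rw [map_sum]
          push_cast
          simp
      _ = x := by rw [euclid_decomp]; exact hP
  · rintro ⟨c, hc0, rfl⟩
    set q : EuclideanSpace ℝ (Fin d) := ∑ i, c i • EuclideanSpace.single i (1:ℝ) with hqdef
    have hPq : (Submodule.orthogonalProjectionOnto (Vred u) q : EuclideanSpace ℝ (Fin d))
        = ∑ i, c i • ((Submodule.orthogonalProjectionOnto (Vred u) (EuclideanSpace.single i (1:ℝ)) :
            EuclideanSpace ℝ (Fin d))) := by
      rw [hqdef, map_sum]
      push_cast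
      simp
    rw [← hPq]
    refine ⟨Submodule.coe_mem _, q - (Submodule.orthogonalProjectionOnto (Vred u) q :
      EuclideanSpace ℝ (Fin d)), Submodule.sub_starProjection_mem_orthogonal (K := Vred u) q, ?_⟩
    rw [add_sub_cancel]
    intro i
    have : q i = c i := by
      rw [hqdef, WithLp.ofLp_sum, Finset.sum_apply i Finset.univ _]
      simp [EuclideanSpace.single_apply]
    rw [this]; exact hc0 i

lemma vplus_closed : IsClosed (Vplus u) := by
  rw [vplus_eq_cone]
  exact coneFin_closed d _

lemma vplus_zero_mem : (0 : EuclideanSpace ℝ (Fin d)) ∈ Vplus u :=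
  ⟨Submodule.zero_mem _, 0, Submodule.zero_mem _, by intro i; simp⟩

lemma vplus_smul {c : ℝ} (hc : 0 ≤ c) {v : EuclideanSpace ℝ (Fin d)} (hv : v ∈ Vplus u) :
    c • v ∈ Vplus u := by
  obtain ⟨hvV, h, hh, hq⟩ := hv
  refine ⟨Submodule.smul_mem _ _ hvV, c • h, Submodule.smul_mem _ _ hh, ?_⟩
  rw [← smul_add]
  intro i
  have : (c • (v + h)) i = c * (v + h) i := rfl
  rw [this]
  exact mul_nonneg hc (hq i)

lemma vplus_combo {a b : ℝ} (ha : 0 ≤ a) (hb : 0 ≤ b) {v w : EuclideanSpace ℝ (Fin d)}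
    (hv : v ∈ Vplus u) (hw : w ∈ Vplus u) : a • v + b • w ∈ Vplus u := by
  obtain ⟨hvV, h1, hh1, hq1⟩ := hv
  obtain ⟨hwV, h2, hh2, hq2⟩ := hw
  refine ⟨Submodule.add_mem _ (Submodule.smul_mem _ _ hvV) (Submodule.smul_mem _ _ hwV),
    a • h1 + b • h2, Submodule.add_mem _ (Submodule.smul_mem _ _ hh1)
      (Submodule.smul_mem _ _ hh2), ?_⟩
  have : a • v + b • w + (a • h1 + b • h2) = a • (v + h1) + b • (w + h2) := by
    module
  rw [this]
  intro i
  have : (a • (v + h1) + b • (w + h2)) i = a * (v + h1) i + b * (w + h2) i := rfl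
  rw [this]
  exact add_nonneg (mul_nonneg ha (hq1 i)) (mul_nonneg hb (hq2 i))

end Geom

section Anal

variable {d : ℕ} {r : ℕ} (u : Fin r → EuclideanSpace ℝ (Fin d))

def Tset (k : ℕ) : Set (EuclideanSpace ℝ (Fin d)) :=
  {x | ∀ j : Fin r, (j : ℕ) < k → ⟪x, u j⟫ = 0}

lemma tset_closed (k : ℕ) : IsClosed (Tset u k) := by
  have : Tset u k = ⋂ j ∈ {j : Fin r | (j : ℕ) < k}, {x | ⟪x, u j⟫ = 0} := by
    ext x; simp only [Tset, Set.mem_iInter, Set.mem_setOf_eq]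
  rw [this]
  exact isClosed_biInter fun j _ =>
    isClosed_eq (continuous_id.inner continuous_const) continuous_const

lemma tset_meas (k : ℕ) : MeasurableSet (Tset u k) := (tset_closed u k).measurableSet

lemma tset_zero : Tset u 0 = Set.univ := by ext x; simp [Tset]

lemma tset_succ (k : Fin r) :
    Tset u ((k : ℕ) + 1) = Tset u (k : ℕ) ∩ {y | ⟪y, u k⟫ = 0} := by
  ext x
  simp only [Tset, Set.mem_inter_iff, Set.mem_setOf_eq]
  constructor
  · intro h
    exact ⟨fun j hj => h j (Nat.lt_succ_of_lt hj), h k (Nat.lt_succ_self _)⟩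
  · rintro ⟨h1, h2⟩ j hj
    rcases Nat.lt_succ_iff_lt_or_eq.mp hj with h | h
    · exact h1 j h
    · have hj : j = k := Fin.ext h
      subst hj; exact h2

lemma tset_cond_eq (k : Fin r) :
    {x : EuclideanSpace ℝ (Fin d) | ∀ j, j < k → ⟪x, u j⟫ = 0} = Tset u (k : ℕ) := by
  ext x
  simp only [Tset, Set.mem_setOf_eq, Fin.lt_def]

lemma vred_eq_tset : (Vred u : Set (EuclideanSpace ℝ (Fin d))) = Tset u r := by
  ext x
  rw [SetLike.mem_coe, mem_vred_iff]
  constructor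
  · intro h j _
    rw [real_inner_comm]; exact h j
  · intro h j
    rw [real_inner_comm]; exact h j j.isLt

variable (μ : Measure (EuclideanSpace ℝ (Fin d))) [IsProbabilityMeasure μ]

lemma ae_nonpos_of_cond (k : Fin r)
    (hadm : μ ({x | ⟪x, u k⟫ ≤ 0} ∩ Tset u (k : ℕ)) = μ (Tset u (k : ℕ))) :
    ∀ᵐ y ∂μ, y ∈ Tset u (k : ℕ) → ⟪y, u k⟫ ≤ 0 := by
  have hmeasL : MeasurableSet {x : EuclideanSpace ℝ (Fin d) | ⟪x, u k⟫ ≤ 0} :=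
    (isClosed_le (continuous_id.inner continuous_const) continuous_const).measurableSet
  have hdiff : μ (Tset u (k : ℕ) \ ({x | ⟪x, u k⟫ ≤ 0} ∩ Tset u (k : ℕ))) = 0 := by
    rw [measure_diff Set.inter_subset_right
      ((hmeasL.inter (tset_meas u (k : ℕ))).nullMeasurableSet) (measure_ne_top μ _),
      hadm, tsub_self]
  rw [ae_iff]
  have hset : {a | ¬(a ∈ Tset u (k : ℕ) → ⟪a, u k⟫ ≤ 0)}
      = Tset u (k : ℕ) \ ({x | ⟪x, u k⟫ ≤ 0} ∩ Tset u (k : ℕ)) := by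
    ext y
    simp only [Set.mem_setOf_eq, Set.mem_diff, Set.mem_inter_iff, Classical.not_imp]
    tauto
  rw [hset]
  exact hdiff

lemma laplace_step (hexp : ∀ z : EuclideanSpace ℝ (Fin d),
      Integrable (fun y => Real.exp ⟪z, y⟫) μ) (k : Fin r)
    (hadm : μ ({x | ⟪x, u k⟫ ≤ 0} ∩ Tset u (k : ℕ)) = μ (Tset u (k : ℕ)))
    (z : EuclideanSpace ℝ (Fin d)) :
    Tendsto (fun n : ℕ => ∫ y in Tset u (k : ℕ), Real.exp ⟪z + (n : ℝ) • u k, y⟫ ∂μ) atTop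
      (𝓝 (∫ y in Tset u ((k : ℕ) + 1), Real.exp ⟪z, y⟫ ∂μ)) := by
  have hae := ae_nonpos_of_cond u μ k hadm
  have hmeask := tset_meas u (k : ℕ)
  have hmeask1 := tset_meas u ((k : ℕ) + 1)
  have hrw : ∀ n : ℕ, ∫ y in Tset u (k : ℕ), Real.exp ⟪z + (n : ℝ) • u k, y⟫ ∂μ
      = ∫ y, Set.indicator (Tset u (k : ℕ))
          (fun y => Real.exp ⟪z + (n : ℝ) • u k, y⟫) y ∂μ :=
    fun n => (integral_indicator hmeask).symm
  have hrw2 : ∫ y in Tset u ((k : ℕ) + 1), Real.exp ⟪z, y⟫ ∂μ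
      = ∫ y, Set.indicator (Tset u ((k : ℕ) + 1)) (fun y => Real.exp ⟪z, y⟫) y ∂μ :=
    (integral_indicator hmeask1).symm
  simp only [hrw, hrw2]
  apply tendsto_integral_of_dominated_convergence
    (Set.indicator (Tset u (k : ℕ)) (fun y => Real.exp ⟪z, y⟫))
  · intro n
    exact ((Real.continuous_exp.comp
      (continuous_const.inner continuous_id)).aestronglyMeasurable).indicator hmeask
  · exact (hexp z).indicator hmeask
  · intro n
    filter_upwards [hae] with y hy
    by_cases hyT : y ∈ Tset u (k : ℕ)
    · rw [Set.indicator_of_mem hyT, Set.indicator_of_mem hyT, Real.norm_eq_abs,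
        abs_of_pos (Real.exp_pos _)]
      apply Real.exp_le_exp.mpr
      rw [inner_add_left, real_inner_smul_left]
      have h1 : ⟪u k, y⟫ ≤ 0 := by rw [real_inner_comm]; exact hy hyT
      have h2 : (n : ℝ) * ⟪u k, y⟫ ≤ 0 :=
        mul_nonpos_of_nonneg_of_nonpos (Nat.cast_nonneg n) h1
      linarith
    · rw [Set.indicator_of_notMem hyT, Set.indicator_of_notMem hyT]
      simp
  · filter_upwards [hae] with y hy
    by_cases hyT : y ∈ Tset u (k : ℕ)
    · have hc := hy hyT
      have hrwn : ∀ n : ℕ, Set.indicator (Tset u (k : ℕ))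
          (fun y => Real.exp ⟪z + (n : ℝ) • u k, y⟫) y
          = Real.exp (⟪z, y⟫ + (n : ℝ) * ⟪u k, y⟫) := by
        intro n
        rw [Set.indicator_of_mem hyT, inner_add_left, real_inner_smul_left]
      simp only [hrwn]
      rcases lt_or_eq_of_le hc with hlt | heq
      · have hyT1 : y ∉ Tset u ((k : ℕ) + 1) := by
          rw [tset_succ]
          rintro ⟨-, h0⟩
          rw [Set.mem_setOf_eq] at h0
          exact absurd h0 (ne_of_lt hlt)
        rw [Set.indicator_of_notMem hyT1]
        have hck : ⟪u k, y⟫ < 0 := by rwa [real_inner_comm]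
        have h1 : Tendsto (fun n : ℕ => ⟪z, y⟫ + (n : ℝ) * ⟪u k, y⟫) atTop atBot := by
          apply tendsto_atBot_add_const_left
          exact (tendsto_natCast_atTop_atTop).atTop_mul_const_of_neg hck
        exact Real.tendsto_exp_atBot.comp h1
      · have hyT1 : y ∈ Tset u ((k : ℕ) + 1) := by
          rw [tset_succ]
          exact ⟨hyT, heq⟩
        rw [Set.indicator_of_mem hyT1]
        have hck : ⟪u k, y⟫ = 0 := by rw [real_inner_comm]; exact heq
        simp only [hck, mul_zero, add_zero]
        exact tendsto_const_nhds
    · have hyT1 : y ∉ Tset u ((k : ℕ) + 1) := fun h => hyT (by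
        rw [tset_succ] at h; exact h.1)
      simp only [Set.indicator_of_notMem hyT, Set.indicator_of_notMem hyT1]
      exact tendsto_const_nhds

lemma laplace_bddBelow : BddBelow (laplace μ '' Qpos d) := by
  refine ⟨0, ?_⟩
  rintro a ⟨z, hz, rfl⟩
  exact integral_nonneg fun y => (Real.exp_pos _).le

lemma laplace_infle (hexp : ∀ z : EuclideanSpace ℝ (Fin d),
      Integrable (fun y => Real.exp ⟪z, y⟫) μ)
    (hQu : ∀ k, u k ∈ Qpos d)
    (hadm : ∀ k : Fin r,
      μ ({x | ⟪x, u k⟫ ≤ 0} ∩ Tset u (k : ℕ)) = μ (Tset u (k : ℕ))) :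
    ∀ k, k ≤ r → ∀ z ∈ Qpos d,
      sInf (laplace μ '' Qpos d) ≤ ∫ y in Tset u k, Real.exp ⟪z, y⟫ ∂μ := by
  intro k
  induction k with
  | zero =>
      intro _ z hz
      rw [tset_zero, Measure.restrict_univ]
      exact csInf_le (laplace_bddBelow μ) ⟨z, hz, rfl⟩
  | succ k ih =>
      intro hk1 z hz
      have hk : k < r := hk1
      have hstep := laplace_step u μ hexp ⟨k, hk⟩ (hadm ⟨k, hk⟩) z
      apply ge_of_tendsto' hstep
      intro n
      have hzn : z + (n : ℝ) • u ⟨k, hk⟩ ∈ Qpos d := by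
        intro i
        have hco : (z + (n : ℝ) • u ⟨k, hk⟩) i = z i + (n : ℝ) * u ⟨k, hk⟩ i := rfl
        rw [hco]
        exact add_nonneg (hz i) (mul_nonneg (Nat.cast_nonneg n) (hQu ⟨k, hk⟩ i))
      exact ih (le_of_lt hk) _ hzn

end Anal


section Anal2

variable {d : ℕ}

def expVec (d : ℕ) (t : Finset (Fin d)) (R : ℝ) : EuclideanSpace ℝ (Fin d) :=
  ∑ i, (if i ∈ t then R else -R) • EuclideanSpace.single i (1 : ℝ)

lemma expVec_apply (t : Finset (Fin d)) (R : ℝ) (i : Fin d) :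
    expVec d t R i = if i ∈ t then R else -R := by
  rw [expVec, WithLp.ofLp_sum, Finset.sum_apply i Finset.univ _]
  simp [EuclideanSpace.single_apply, -ite_smul]

lemma abs_coord_le_norm (v : EuclideanSpace ℝ (Fin d)) (i : Fin d) : |v i| ≤ ‖v‖ := by
  have h1 : ⟪v, EuclideanSpace.single i (1 : ℝ)⟫ = v i := by
    rw [EuclideanSpace.inner_single_right]
    simp
  calc |v i| = |⟪v, EuclideanSpace.single i (1 : ℝ)⟫| := by rw [h1]
    _ ≤ ‖v‖ * ‖EuclideanSpace.single i (1 : ℝ)‖ := abs_real_inner_le_norm _ _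
    _ = ‖v‖ := by rw [EuclideanSpace.norm_single]; simp

lemma exp_inner_le_sum (R : ℝ) (v y : EuclideanSpace ℝ (Fin d)) (hv : ‖v‖ ≤ R) :
    Real.exp ⟪v, y⟫ ≤ ∑ t : Finset (Fin d), Real.exp ⟪expVec d t R, y⟫ := by
  have habs : ∀ i, |v i| ≤ R := fun i => (abs_coord_le_norm v i).trans hv
  have key : ∀ (t : Finset (Fin d)),
      (∏ i ∈ t, Real.exp (R * y i)) * ∏ i ∈ Finset.univ \ t, Real.exp (-(R * y i))
        = Real.exp ⟪expVec d t R, y⟫ := by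
    intro t
    rw [← Real.exp_sum, ← Real.exp_sum, ← Real.exp_add]
    congr 1
    rw [inner_pi]
    symm
    have hterm : ∀ i, expVec d t R i * y i
        = if i ∈ t then R * y i else -(R * y i) := by
      intro i
      rw [expVec_apply]
      split <;> ring
    calc ∑ i, expVec d t R i * y i
        = ∑ i, (if i ∈ t then R * y i else -(R * y i)) := by
          exact Finset.sum_congr rfl fun i _ => hterm i
      _ = (∑ i ∈ Finset.univ.filter (· ∈ t), R * y i)
            + ∑ i ∈ Finset.univ.filter (· ∉ t), -(R * y i) := by
          rw [Finset.sum_ite]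
      _ = (∑ i ∈ t, R * y i) + ∑ i ∈ Finset.univ \ t, -(R * y i) := by
          congr 1
          · congr 1
            ext i; simp
          · congr 1
            ext i; simp
  calc Real.exp ⟪v, y⟫ = ∏ i, Real.exp (v i * y i) := by
        rw [inner_pi, Real.exp_sum]
    _ ≤ ∏ i, (Real.exp (R * y i) + Real.exp (-(R * y i))) := by
        apply Finset.prod_le_prod (fun i _ => (Real.exp_pos _).le)
        intro i _
        have h1 : v i * y i ≤ R * |y i| := by
          calc v i * y i ≤ |v i * y i| := le_abs_self _
            _ = |v i| * |y i| := abs_mul _ _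
            _ ≤ R * |y i| := mul_le_mul_of_nonneg_right (habs i) (abs_nonneg _)
        rcases le_or_gt 0 (y i) with hy | hy
        · have h2 : R * |y i| = R * y i := by rw [abs_of_nonneg hy]
          calc Real.exp (v i * y i) ≤ Real.exp (R * y i) :=
                Real.exp_le_exp.mpr (by rw [← h2]; exact h1)
            _ ≤ _ := le_add_of_nonneg_right (Real.exp_pos _).le
        · have h2 : R * |y i| = -(R * y i) := by rw [abs_of_neg hy]; ring
          calc Real.exp (v i * y i) ≤ Real.exp (-(R * y i)) :=
                Real.exp_le_exp.mpr (by rw [← h2]; exact h1)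
            _ ≤ _ := le_add_of_nonneg_left (Real.exp_pos _).le
    _ = ∑ t ∈ Finset.univ.powerset,
          (∏ i ∈ t, Real.exp (R * y i)) * ∏ i ∈ Finset.univ \ t, Real.exp (-(R * y i)) :=
        Finset.prod_add _ _ _
    _ = ∑ t : Finset (Fin d), Real.exp ⟪expVec d t R, y⟫ := by
        rw [Finset.powerset_univ]
        exact Finset.sum_congr rfl fun t _ => key t

lemma laplace_continuous (ν : Measure (EuclideanSpace ℝ (Fin d)))
    (hint : ∀ z : EuclideanSpace ℝ (Fin d), Integrable (fun y => Real.exp ⟪z, y⟫) ν) :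
    Continuous (fun v : EuclideanSpace ℝ (Fin d) => ∫ y, Real.exp ⟪v, y⟫ ∂ν) := by
  rw [continuous_iff_continuousAt]
  intro v
  apply tendsto_integral_filter_of_dominated_convergence
    (fun y => ∑ t : Finset (Fin d), Real.exp ⟪expVec d t (‖v‖ + 1), y⟫)
  · exact Eventually.of_forall fun w =>
      (Real.continuous_exp.comp (continuous_const.inner continuous_id)).aestronglyMeasurable
  · have hball : ∀ᶠ w in 𝓝 v, ‖w‖ ≤ ‖v‖ + 1 := by
      filter_upwards [Metric.closedBall_mem_nhds v one_pos] with w hw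
      have h1 : ‖w - v‖ ≤ 1 := by rwa [Metric.mem_closedBall, dist_eq_norm] at hw
      have h2 := norm_sub_norm_le w v
      linarith
    filter_upwards [hball] with w hw
    apply Eventually.of_forall
    intro y
    rw [Real.norm_eq_abs, abs_of_pos (Real.exp_pos _)]
    exact exp_inner_le_sum (‖v‖ + 1) w y hw
  · exact integrable_finset_sum _ fun t _ => hint _
  · apply Eventually.of_forall
    intro y
    exact ((Real.continuous_exp.comp (continuous_id.inner continuous_const)).tendsto v)

lemma laplace_convexOn (ν : Measure (EuclideanSpace ℝ (Fin d)))
    (hint : ∀ z : EuclideanSpace ℝ (Fin d), Integrable (fun y => Real.exp ⟪z, y⟫) ν) :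
    ConvexOn ℝ Set.univ (fun v : EuclideanSpace ℝ (Fin d) => ∫ y, Real.exp ⟪v, y⟫ ∂ν) := by
  refine ⟨convex_univ, fun a _ b _ s t hs ht hst => ?_⟩
  have hpt : ∀ y, Real.exp ⟪s • a + t • b, y⟫
      ≤ s * Real.exp ⟪a, y⟫ + t * Real.exp ⟪b, y⟫ := by
    intro y
    rw [inner_add_left, real_inner_smul_left, real_inner_smul_left]
    have := convexOn_exp.2 (Set.mem_univ ⟪a, y⟫) (Set.mem_univ ⟪b, y⟫) hs ht hst
    simpa using this
  simp only [smul_eq_mul]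
  calc ∫ y, Real.exp ⟪s • a + t • b, y⟫ ∂ν
      ≤ ∫ y, (s * Real.exp ⟪a, y⟫ + t * Real.exp ⟪b, y⟫) ∂ν :=
        integral_mono (hint _) (((hint a).const_mul s).add ((hint b).const_mul t)) hpt
    _ = s * ∫ y, Real.exp ⟪a, y⟫ ∂ν + t * ∫ y, Real.exp ⟪b, y⟫ ∂ν := by
        rw [integral_add ((hint a).const_mul s) ((hint b).const_mul t),
          integral_const_mul, integral_const_mul]

end Anal2


section Attain

variable {d : ℕ} {r : ℕ}

lemma exists_min (u : Fin r → EuclideanSpace ℝ (Fin d))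
    (μ : Measure (EuclideanSpace ℝ (Fin d))) [IsProbabilityMeasure μ]
    (hexp : ∀ z : EuclideanSpace ℝ (Fin d),
      Integrable (fun y => Real.exp ⟪z, y⟫) μ)
    (hu : MaximalAdmissible μ u) :
    ∃ v₀ ∈ Vplus u, ∀ v ∈ Vplus u,
      (∫ y in (Vred u : Set (EuclideanSpace ℝ (Fin d))), Real.exp ⟪v₀, y⟫ ∂μ)
        ≤ ∫ y in (Vred u : Set (EuclideanSpace ℝ (Fin d))), Real.exp ⟪v, y⟫ ∂μ := by
  classical
  obtain ⟨⟨hQu, hli, hcond⟩, hmax⟩ := hu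
  set Vs : Set (EuclideanSpace ℝ (Fin d)) := (Vred u : Set (EuclideanSpace ℝ (Fin d)))
    with hVsdef
  have hVmeas : MeasurableSet Vs := by
    rw [hVsdef, vred_eq_tset]; exact tset_meas u r
  have hint : ∀ z : EuclideanSpace ℝ (Fin d),
      Integrable (fun y => Real.exp ⟪z, y⟫) (μ.restrict Vs) := fun z => (hexp z).restrict
  set f : EuclideanSpace ℝ (Fin d) → ℝ :=
    fun v => ∫ y, Real.exp ⟪v, y⟫ ∂(μ.restrict Vs) with hfdef
  have hcont : Continuous f := laplace_continuous (μ.restrict Vs) hint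
  have hconv : ConvexOn ℝ Set.univ f := laplace_convexOn (μ.restrict Vs) hint
  show ∃ v₀ ∈ Vplus u, ∀ v ∈ Vplus u, f v₀ ≤ f v
  by_contra hglobal
  push_neg at hglobal
  -- minimizers on balls
  have hminball : ∀ n : ℕ, ∃ zz, (zz ∈ Vplus u ∩ Metric.closedBall 0 ((n : ℝ) + 1)) ∧
      ∀ y ∈ Vplus u ∩ Metric.closedBall 0 ((n : ℝ) + 1), f zz ≤ f y := by
    intro n
    have hcpt : IsCompact (Vplus u ∩ Metric.closedBall 0 ((n : ℝ) + 1)) :=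
      (isCompact_closedBall (0 : EuclideanSpace ℝ (Fin d)) _).of_isClosed_subset
        ((vplus_closed u).inter Metric.isClosed_closedBall) Set.inter_subset_right
    obtain ⟨zz, hz, hmin⟩ := hcpt.exists_isMinOn
      ⟨0, vplus_zero_mem u, by simp; positivity⟩ hcont.continuousOn
    exact ⟨zz, hz, fun y hy => hmin hy⟩
  have hnorm : ∀ (n : ℕ) (zz : EuclideanSpace ℝ (Fin d)),
      zz ∈ Vplus u ∩ Metric.closedBall 0 ((n : ℝ) + 1) →
      (∀ y ∈ Vplus u ∩ Metric.closedBall 0 ((n : ℝ) + 1), f zz ≤ f y) →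
      ‖zz‖ = (n : ℝ) + 1 := by
    intro n zz hzz hmin
    obtain ⟨hzV, hzB⟩ := hzz
    by_contra hne
    have hzB' : ‖zz‖ ≤ (n : ℝ) + 1 := by
      rwa [Metric.mem_closedBall, dist_zero_right] at hzB
    have hlt : ‖zz‖ < (n : ℝ) + 1 := lt_of_le_of_ne hzB' hne
    obtain ⟨v, hvV, hfv⟩ := hglobal zz hzV
    set D : ℝ := ‖v‖ + ‖zz‖ + 1 with hD
    have hDpos : 0 < D := by positivity
    set t : ℝ := min 1 (((n : ℝ) + 1 - ‖zz‖) / D) with htdef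
    have ht0 : 0 < t := lt_min one_pos (div_pos (by linarith) hDpos)
    have ht1 : t ≤ 1 := min_le_left _ _
    have htD : t * D ≤ (n : ℝ) + 1 - ‖zz‖ := by
      have hm : t ≤ ((n : ℝ) + 1 - ‖zz‖) / D := min_le_right _ _
      calc t * D ≤ (((n : ℝ) + 1 - ‖zz‖) / D) * D :=
            mul_le_mul_of_nonneg_right hm hDpos.le
        _ = (n : ℝ) + 1 - ‖zz‖ := by field_simp
    have hpV : (1 - t) • zz + t • v ∈ Vplus u :=
      vplus_combo u (by linarith) ht0.le hzV hvV
    have hpB : (1 - t) • zz + t • v ∈ Metric.closedBall 0 ((n : ℝ) + 1) := by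
      rw [Metric.mem_closedBall, dist_zero_right]
      calc ‖(1 - t) • zz + t • v‖ ≤ ‖(1 - t) • zz‖ + ‖t • v‖ := norm_add_le _ _
        _ = (1 - t) * ‖zz‖ + t * ‖v‖ := by
            rw [norm_smul, norm_smul, Real.norm_eq_abs, Real.norm_eq_abs,
              abs_of_nonneg (by linarith : (0:ℝ) ≤ 1 - t), abs_of_nonneg ht0.le]
        _ ≤ (n : ℝ) + 1 := by nlinarith [norm_nonneg v, norm_nonneg zz]
    have hminp := hmin _ ⟨hpV, hpB⟩
    have hconv2 := hconv.2 (Set.mem_univ zz) (Set.mem_univ v)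
      (by linarith : (0:ℝ) ≤ 1 - t) ht0.le (by ring)
    simp only [smul_eq_mul] at hconv2
    nlinarith [mul_pos ht0 (sub_pos.mpr hfv)]
  have hseq : ∀ n : ℕ, ∃ zz : EuclideanSpace ℝ (Fin d), zz ∈ Vplus u ∧
      ‖zz‖ = (n : ℝ) + 1 ∧
      ∀ y ∈ Vplus u ∩ Metric.closedBall 0 ((n : ℝ) + 1), f zz ≤ f y := by
    intro n
    obtain ⟨zz, hz, hmin⟩ := hminball n
    exact ⟨zz, hz.1, hnorm n zz hz hmin, hmin⟩
  choose z hzV hznorm hzmin using hseq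
  have hwmem : ∀ n : ℕ, ((n : ℝ) + 1)⁻¹ • z n ∈ Vplus u ∩ Metric.sphere 0 1 := by
    intro n
    refine ⟨vplus_smul u (by positivity) (hzV n), ?_⟩
    rw [mem_sphere_zero_iff_norm, norm_smul, Real.norm_eq_abs,
      abs_of_pos (by positivity : (0:ℝ) < ((n : ℝ) + 1)⁻¹), hznorm n]
    field_simp
  obtain ⟨w, hwsph, φ, hφ, hconvw⟩ :=
    (isCompact_sphere (0 : EuclideanSpace ℝ (Fin d)) 1).tendsto_subseq
      (fun n => (hwmem n).2)
  have hwV : w ∈ Vplus u := (vplus_closed u).mem_of_tendsto hconvw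
    (Eventually.of_forall fun n => (hwmem (φ n)).1)
  have hwnorm : ‖w‖ = 1 := mem_sphere_zero_iff_norm.mp hwsph
  have hφtop : Tendsto (fun n : ℕ => ((φ n : ℝ) + 1)) atTop atTop :=
    tendsto_atTop_add_const_right _ 1
      (tendsto_natCast_atTop_atTop.comp hφ.tendsto_atTop)
  -- the recession inequality
  have hkey : ∀ v ∈ Vplus u, ∀ t : ℝ, 0 ≤ t → f (v + t • w) ≤ f v := by
    intro v hvV t ht
    have hs0 : Tendsto (fun n : ℕ => t * ((φ n : ℝ) + 1)⁻¹) atTop (𝓝 0) := by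
      have h0 := hφtop.inv_tendsto_atTop
      simpa using h0.const_mul t
    set p : ℕ → EuclideanSpace ℝ (Fin d) :=
      fun n => (1 - t * ((φ n : ℝ) + 1)⁻¹) • v + t • (((φ n : ℝ) + 1)⁻¹ • z (φ n))
      with hpdef
    have hplim : Tendsto p atTop (𝓝 (v + t • w)) := by
      have h1 : Tendsto (fun n : ℕ => 1 - t * ((φ n : ℝ) + 1)⁻¹) atTop (𝓝 1) := by
        simpa using tendsto_const_nhds.sub hs0
      have h2 : Tendsto (fun n : ℕ => ((φ n : ℝ) + 1)⁻¹ • z (φ n)) atTop (𝓝 w) := hconvw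
      have h3 := (h1.smul
          (tendsto_const_nhds : Tendsto (fun _ : ℕ => v) atTop (𝓝 v))).add
        ((tendsto_const_nhds : Tendsto (fun _ : ℕ => t) atTop (𝓝 t)).smul h2)
      simpa [one_smul] using h3
    have hflim : Tendsto (fun n => f (p n)) atTop (𝓝 (f (v + t • w))) :=
      (hcont.tendsto _).comp hplim
    refine le_of_tendsto hflim ?_
    filter_upwards [hφtop.eventually_ge_atTop t, hφtop.eventually_ge_atTop ‖v‖]
      with n h1 h2
    have hden : (0:ℝ) < (φ n : ℝ) + 1 := by positivity
    set s : ℝ := t * ((φ n : ℝ) + 1)⁻¹ with hsdef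
    have hs0' : 0 ≤ s := mul_nonneg ht (by positivity)
    have hs1 : s ≤ 1 := by
      rw [hsdef, ← div_eq_mul_inv, div_le_one hden]; linarith
    have hfz : f (z (φ n)) ≤ f v := hzmin (φ n) v
      ⟨hvV, by rw [Metric.mem_closedBall, dist_zero_right]; linarith⟩
    have hconv2 := hconv.2 (Set.mem_univ v) (Set.mem_univ (z (φ n)))
      (by linarith : (0:ℝ) ≤ 1 - s) hs0' (by ring)
    simp only [smul_eq_mul] at hconv2
    have hpn : p n = (1 - s) • v + s • z (φ n) := by
      rw [hpdef]
      simp only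
      rw [hsdef, smul_smul]
    have hfp : f (p n) ≤ (1 - s) * f v + s * f (z (φ n)) := by
      rw [hpn]; exact hconv2
    nlinarith [mul_nonneg hs0' (sub_nonneg.mpr hfz)]
  -- a.e. nonpositivity of ⟪·, w⟫ on Vs
  set A : ℕ → Set (EuclideanSpace ℝ (Fin d)) :=
    fun k => Vs ∩ {y | ((k : ℝ) + 1)⁻¹ ≤ ⟪y, w⟫} with hAdef
  have hAmeas : ∀ k, MeasurableSet (A k) := fun k => hVmeas.inter
    ((isClosed_le continuous_const (continuous_id.inner continuous_const)).measurableSet)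
  have hf0 : 0 ≤ f 0 := integral_nonneg fun y => (Real.exp_pos _).le
  have hAnull : ∀ k, μ (A k) = 0 := by
    intro k
    by_contra hA
    set ε : ℝ := ((k : ℝ) + 1)⁻¹ with hεdef
    have hε : 0 < ε := by positivity
    set c : ℝ := (μ (A k)).toReal with hcdef
    have hc : 0 < c := ENNReal.toReal_pos hA (measure_ne_top μ _)
    have hub : ∀ t : ℝ, 0 ≤ t → Real.exp (t * ε) * c ≤ f 0 := by
      intro t ht
      have h1 : f (t • w) ≤ f 0 := by
        have h0 := hkey 0 (vplus_zero_mem u) t ht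
        simpa using h0
      have hle1 : Real.exp (t * ε) * c ≤ ∫ y in A k, Real.exp ⟪t • w, y⟫ ∂μ := by
        have hc1 : ∫ (_ : EuclideanSpace ℝ (Fin d)) in A k, Real.exp (t * ε) ∂μ
            = Real.exp (t * ε) * c := by
          rw [setIntegral_const, smul_eq_mul, hcdef, mul_comm, measureReal_def]
        rw [← hc1]
        apply setIntegral_mono_on
          (integrableOn_const (measure_ne_top μ _))
          ((hexp (t • w)).integrableOn) (hAmeas k)
        intro y hy
        apply Real.exp_le_exp.mpr
        rw [real_inner_smul_left]
        exact mul_le_mul_of_nonneg_left (by rw [real_inner_comm]; exact hy.2) ht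
      have hle2 : ∫ y in A k, Real.exp ⟪t • w, y⟫ ∂μ ≤ f (t • w) := by
        apply setIntegral_mono_set ((hexp (t • w)).integrableOn)
          (Eventually.of_forall fun y => (Real.exp_pos _).le)
          (HasSubset.Subset.eventuallyLE Set.inter_subset_left)
      linarith
    set t₀ : ℝ := f 0 / (ε * c) with ht₀def
    have ht₀ : 0 ≤ t₀ := div_nonneg hf0 (by positivity)
    have h3 : (t₀ * ε + 1) * c ≤ Real.exp (t₀ * ε) * c :=
      mul_le_mul_of_nonneg_right (Real.add_one_le_exp _) hc.le
    have h4 : (t₀ * ε + 1) * c ≤ f 0 := h3.trans (hub t₀ ht₀)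
    have ht₀ε : t₀ * ε = f 0 / c := by
      rw [ht₀def]; field_simp
    rw [ht₀ε] at h4
    have h5 : f 0 / c * c = f 0 := div_mul_cancel₀ _ (ne_of_gt hc)
    nlinarith
  have hae : ∀ᵐ y ∂μ, y ∈ Vs → ⟪y, w⟫ ≤ 0 := by
    rw [ae_iff]
    apply measure_mono_null (t := ⋃ k, A k) _ (measure_iUnion_null hAnull)
    intro y hy
    simp only [Set.mem_setOf_eq, Classical.not_imp, not_le] at hy
    obtain ⟨hyV, hypos⟩ := hy
    obtain ⟨k, hk⟩ := exists_nat_gt (⟪y, w⟫)⁻¹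
    refine Set.mem_iUnion.mpr ⟨k, hyV, ?_⟩
    show ((k : ℝ) + 1)⁻¹ ≤ ⟪y, w⟫
    have hk1 : (⟪y, w⟫)⁻¹ ≤ (k : ℝ) + 1 := by linarith
    calc ((k : ℝ) + 1)⁻¹ ≤ ((⟪y, w⟫)⁻¹)⁻¹ := by
          apply inv_anti₀ (inv_pos.mpr hypos) hk1
      _ = ⟪y, w⟫ := inv_inv _
  -- contradiction with maximality
  obtain ⟨hwVred, h, hh, hQ⟩ := hwV
  apply hmax (w + h) hQ
  refine ⟨?_, ?_, ?_⟩
  · intro k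
    refine Fin.lastCases ?_ ?_ k
    · rw [Fin.snoc_last]; exact hQ
    · intro j; rw [Fin.snoc_castSucc]; exact hQu j
  · rw [linearIndependent_fin_snoc]
    refine ⟨hli, ?_⟩
    intro hmem
    have hspan : (Vred u)ᗮ = Submodule.span ℝ (Set.range u) :=
      Submodule.orthogonal_orthogonal _
    have hwmem2 : w ∈ (Vred u)ᗮ := by
      have hw' : w = (w + h) - h := by abel
      rw [hw']
      exact Submodule.sub_mem _ (by rw [hspan]; exact hmem) hh
    have hww : ⟪w, w⟫ = 0 :=
      (Submodule.mem_orthogonal _ _).mp hwmem2 w hwVred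
    have hw0 : w = (0 : EuclideanSpace ℝ (Fin d)) := inner_self_eq_zero.mp hww
    rw [hw0] at hwnorm
    simp at hwnorm
  · intro k
    refine Fin.lastCases ?_ ?_ k
    · -- the new condition for the appended vector
      have hset1 : {x : EuclideanSpace ℝ (Fin d) | ∀ j, j < Fin.last r →
          ⟪x, Fin.snoc (α := fun _ => EuclideanSpace ℝ (Fin d)) u (w + h) j⟫ = 0} = Vs := by
        ext x
        simp only [Set.mem_setOf_eq]
        constructor
        · intro hx
          rw [hVsdef, SetLike.mem_coe, mem_vred_iff]
          intro j
          have hxx := hx (Fin.castSucc j) (Fin.castSucc_lt_last j)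
          rw [Fin.snoc_castSucc] at hxx
          rw [real_inner_comm]; exact hxx
        · intro hx j hj
          obtain ⟨j', rfl⟩ := Fin.exists_castSucc_eq.mpr (Fin.ne_last_of_lt hj)
          rw [Fin.snoc_castSucc]
          rw [hVsdef, SetLike.mem_coe, mem_vred_iff] at hx
          rw [real_inner_comm]; exact hx j'
      rw [Fin.snoc_last, hset1]
      apply le_antisymm (measure_mono Set.inter_subset_right)
      have hinner : ∀ y ∈ Vs, ⟪y, w + h⟫ = ⟪y, w⟫ := by
        intro y hyV
        rw [inner_add_right]
        have h0 : ⟪y, h⟫ = 0 :=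
          (Submodule.mem_orthogonal _ _).mp hh y hyV
        rw [h0, add_zero]
      have hnull : μ (Vs \ ({x | ⟪x, w + h⟫ ≤ 0} ∩ Vs)) = 0 := by
        apply measure_mono_null _ (ae_iff.mp hae)
        intro y hy
        obtain ⟨hyV, hyn⟩ := hy
        simp only [Set.mem_setOf_eq, Classical.not_imp, not_le]
        refine ⟨hyV, ?_⟩
        have : ¬ ⟪y, w + h⟫ ≤ 0 := by
          intro hcon
          exact hyn ⟨hcon, hyV⟩
        rw [hinner y hyV] at this
        linarith
      calc μ Vs ≤ μ (({x | ⟪x, w + h⟫ ≤ 0} ∩ Vs) ∪ (Vs \ ({x | ⟪x, w + h⟫ ≤ 0} ∩ Vs))) := by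
            apply measure_mono
            intro y hy
            by_cases hmem : y ∈ {x | ⟪x, w + h⟫ ≤ 0} ∩ Vs
            · exact Or.inl hmem
            · exact Or.inr ⟨hy, hmem⟩
        _ ≤ μ ({x | ⟪x, w + h⟫ ≤ 0} ∩ Vs) + μ (Vs \ ({x | ⟪x, w + h⟫ ≤ 0} ∩ Vs)) :=
            measure_union_le _ _
        _ = μ ({x | ⟪x, w + h⟫ ≤ 0} ∩ Vs) := by rw [hnull, add_zero]
    · intro j
      have hset2 : {x : EuclideanSpace ℝ (Fin d) | ∀ j', j' < Fin.castSucc j →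
          ⟪x, Fin.snoc (α := fun _ => EuclideanSpace ℝ (Fin d)) u (w + h) j'⟫ = 0} = {x | ∀ i, i < j → ⟪x, u i⟫ = 0} := by
        ext x
        simp only [Set.mem_setOf_eq]
        constructor
        · intro hx i hi
          have hxx := hx (Fin.castSucc i) (by rwa [Fin.castSucc_lt_castSucc_iff])
          rwa [Fin.snoc_castSucc] at hxx
        · intro hx j' hj'
          have hne : j' ≠ Fin.last r := by
            intro hlast
            rw [hlast] at hj'
            exact (Fin.castSucc_lt_last j).not_gt hj'
          obtain ⟨i, rfl⟩ := Fin.exists_castSucc_eq.mpr hne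
          rw [Fin.snoc_castSucc]
          exact hx i (by rwa [Fin.castSucc_lt_castSucc_iff] at hj')
      rw [Fin.snoc_castSucc, hset2]
      exact hcond j

end Attain


/-- If `inf_Q L_μ > 0`, then the Laplace transform of the conditional distribution
`μ|V = μ[|V]` attains a global minimum on `V^+` at some `v₀`, and
`inf_Q L_μ = μ(V) · L_{μ|V}(v₀)`. -/
theorem stmt5 (d : ℕ) (hd : 1 ≤ d)
    (μ : Measure (EuclideanSpace ℝ (Fin d))) [IsProbabilityMeasure μ]
    (hexp : ∀ z : EuclideanSpace ℝ (Fin d), Integrable (fun y => Real.exp ⟪z, y⟫) μ)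
    {r : ℕ} (hr : 1 ≤ r) (u : Fin r → EuclideanSpace ℝ (Fin d))
    (hu : MaximalAdmissible μ u)
    (hinf : 0 < sInf (laplace μ '' Qpos d)) :
    ∃ v₀ ∈ Vplus u,
      (∀ v ∈ Vplus u,
        laplace (ProbabilityTheory.cond μ (Vred u : Set (EuclideanSpace ℝ (Fin d)))) v₀ ≤
          laplace (ProbabilityTheory.cond μ (Vred u : Set (EuclideanSpace ℝ (Fin d)))) v) ∧
      sInf (laplace μ '' Qpos d) =
        (μ (Vred u : Set (EuclideanSpace ℝ (Fin d)))).toReal *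
          laplace (ProbabilityTheory.cond μ (Vred u : Set (EuclideanSpace ℝ (Fin d)))) v₀ := by
  classical
  set Vs : Set (EuclideanSpace ℝ (Fin d)) := (Vred u : Set (EuclideanSpace ℝ (Fin d)))
    with hVsdef
  have hVmeas : MeasurableSet Vs := by
    rw [hVsdef, vred_eq_tset]; exact tset_meas u r
  set f : EuclideanSpace ℝ (Fin d) → ℝ :=
    fun v => ∫ y in Vs, Real.exp ⟪v, y⟫ ∂μ with hfdef
  have hcond' : ∀ k : Fin r,
      μ ({x | ⟪x, u k⟫ ≤ 0} ∩ Tset u (k : ℕ)) = μ (Tset u (k : ℕ)) := by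
    intro k
    rw [← tset_cond_eq u k]
    exact hu.1.2.2 k
  have hinfle : ∀ v ∈ Vplus u, sInf (laplace μ '' Qpos d) ≤ f v := by
    rintro v ⟨hvV, h, hh, hq⟩
    have h1 := laplace_infle u μ hexp hu.1.1 hcond' r le_rfl (v + h) hq
    have h2 : ∫ y in Tset u r, Real.exp ⟪v + h, y⟫ ∂μ = f v := by
      rw [← vred_eq_tset]
      apply setIntegral_congr_fun hVmeas
      intro y hy
      have h0 : ⟪h, y⟫ = 0 := (Submodule.mem_orthogonal' _ _).mp hh y hy
      simp only
      rw [inner_add_left, h0, add_zero]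
    rw [← h2]
    exact h1
  have hf0 : f 0 = (μ Vs).toReal := by
    rw [hfdef]
    simp only [inner_zero_left, Real.exp_zero]
    rw [setIntegral_const]
    simp [measureReal_def]
  have hmu_pos : 0 < (μ Vs).toReal := by
    have h1 := hinfle 0 (vplus_zero_mem u)
    rw [hf0] at h1
    linarith [hinf]
  have hmu_ne : (μ Vs).toReal ≠ 0 := ne_of_gt hmu_pos
  have hproj : ∀ z ∈ Qpos d,
      ((Submodule.orthogonalProjectionOnto (Vred u) z : EuclideanSpace ℝ (Fin d)) ∈ Vplus u) ∧
      f ((Submodule.orthogonalProjectionOnto (Vred u) z : EuclideanSpace ℝ (Fin d))) ≤ laplace μ z := by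
    intro z hz
    set Pz := (Submodule.orthogonalProjectionOnto (Vred u) z : EuclideanSpace ℝ (Fin d)) with hPzdef
    constructor
    · refine ⟨Submodule.coe_mem _, z - Pz, Submodule.sub_starProjection_mem_orthogonal (K := Vred u) z, ?_⟩
      rw [add_sub_cancel]
      exact hz
    · have heq : f Pz = ∫ y in Vs, Real.exp ⟪z, y⟫ ∂μ := by
        apply setIntegral_congr_fun hVmeas
        intro y hy
        have h0 : ⟪z - Pz, y⟫ = 0 :=
          (Submodule.mem_orthogonal' _ _).mp (Submodule.sub_starProjection_mem_orthogonal (K := Vred u) z) y hy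
        have hzz : ⟪z, y⟫ = ⟪Pz, y⟫ + ⟪z - Pz, y⟫ := by
          rw [← inner_add_left, add_sub_cancel]
        simp only
        rw [hzz, h0, add_zero]
      rw [heq]
      exact setIntegral_le_integral (hexp z) (Eventually.of_forall fun y => (Real.exp_pos _).le)
  obtain ⟨v₀, hv₀, hmin⟩ := exists_min u μ hexp hu
  have hmin' : ∀ v ∈ Vplus u, f v₀ ≤ f v := hmin
  have hcondL : ∀ v, laplace (ProbabilityTheory.cond μ Vs) v = (μ Vs).toReal⁻¹ * f v := by
    intro v
    rw [laplace, ProbabilityTheory.cond, integral_smul_measure, ENNReal.toReal_inv, smul_eq_mul]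
  refine ⟨v₀, hv₀, ?_, ?_⟩
  · intro v hv
    rw [hcondL, hcondL]
    exact mul_le_mul_of_nonneg_left (hmin' v hv) (inv_nonneg.mpr hmu_pos.le)
  · have h1 : sInf (laplace μ '' Qpos d) ≤ f v₀ := hinfle v₀ hv₀
    have h2 : f v₀ ≤ sInf (laplace μ '' Qpos d) := by
      apply le_csInf
      · exact ⟨laplace μ 0, Set.mem_image_of_mem _ (by intro i; simp : (0 : EuclideanSpace ℝ (Fin d)) ∈ Qpos d)⟩
      rintro a ⟨z, hz, rfl⟩
      exact (hmin' _ (hproj z hz).1).trans (hproj z hz).2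
    have h3 : sInf (laplace μ '' Qpos d) = f v₀ := le_antisymm h1 h2
    rw [h3, hcondL]
    field_simp
end
end

section
/- The cone V^+ = V ∩ ⋃_{h ∈ V^⊥} (Q − h) admits the description V^+ = {x ∈ V : ⟨x, e_i⟩ ≥ 0 for all i ∈ I}, where I = {i ∈ {1,…,d} : e_i ∈ V}. -/
open MeasureTheory Filter
open scoped RealInnerProductSpace

noncomputable section

/-- `V^+ = {x ∈ V : ⟨x, e_i⟩ ≥ 0 for all i ∈ I}`, where `I = {i : e_i ∈ V}`. -/
theorem stmt6 (d : ℕ) (hd : 1 ≤ d)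
    (μ : Measure (EuclideanSpace ℝ (Fin d))) [IsProbabilityMeasure μ]
    {r : ℕ} (hr : 1 ≤ r) (u : Fin r → EuclideanSpace ℝ (Fin d))
    (hu : MaximalAdmissible μ u) :
    Vplus u = {x | x ∈ Vred u ∧
      ∀ i : Fin d, EuclideanSpace.single i (1 : ℝ) ∈ Vred u →
        0 ≤ ⟪x, EuclideanSpace.single i (1 : ℝ)⟫} := by
  have hQ : ∀ k, u k ∈ Qpos d := hu.1.1
  ext x
  simp only [Vplus, Set.mem_setOf_eq]
  constructor
  · rintro ⟨hxV, h, hh, hQh⟩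
    refine ⟨hxV, fun i hi => ?_⟩
    have h1 : ⟪h, EuclideanSpace.single i (1 : ℝ)⟫ = 0 := by
      rw [real_inner_comm]
      exact (Submodule.mem_orthogonal _ _).mp hh _ hi
    have h2 : ⟪x + h, EuclideanSpace.single i (1 : ℝ)⟫ = (x + h) i := by
      rw [EuclideanSpace.inner_single_right]; simp
    have h3 : ⟪x, EuclideanSpace.single i (1 : ℝ)⟫
        = ⟪x + h, EuclideanSpace.single i (1 : ℝ)⟫ := by
      rw [inner_add_left, h1, add_zero]
    rw [h3, h2]; exact hQh i
  · rintro ⟨hxV, hpos⟩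
    refine ⟨hxV, ?_⟩
    set s : EuclideanSpace ℝ (Fin d) := ∑ k, u k with hs
    have hsum : ∀ i, s i = ∑ k, u k i := fun i => by
      rw [hs, WithLp.ofLp_sum]; exact Finset.sum_apply i Finset.univ (fun k => (u k).ofLp)
    have hsi : ∀ i, (0 ≤ s i) := by
      intro i
      rw [hsum]
      exact Finset.sum_nonneg fun k _ => hQ k i
    have hspan : s ∈ Submodule.span ℝ (Set.range u) :=
      Submodule.sum_mem _ fun k _ => Submodule.subset_span ⟨k, rfl⟩
    -- coordinates where e_i ∉ V have s i > 0
    have key : ∀ i : Fin d, ¬ (EuclideanSpace.single i (1 : ℝ) ∈ Vred u) → 0 < s i := by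
      intro i hi
      rcases lt_or_eq_of_le (hsi i) with hlt | heq
      · exact hlt
      exfalso
      apply hi
      have hki : ∀ k, u k i = 0 := by
        intro k
        have h0 : ∑ m, u m i = 0 := by rw [← hsum, ← heq]
        have := Finset.sum_eq_zero_iff_of_nonneg (fun m _ => hQ m i) |>.mp h0
        exact this k (Finset.mem_univ k)
      rw [Vred, Submodule.mem_orthogonal]
      intro y hy
      have hle : Submodule.span ℝ (Set.range u) ≤ (ℝ ∙ (EuclideanSpace.single i (1:ℝ)))ᗮ := by
        rw [Submodule.span_le]
        rintro _ ⟨k, rfl⟩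
        rw [SetLike.mem_coe, Submodule.mem_orthogonal_singleton_iff_inner_left,
          EuclideanSpace.inner_single_right]
        simp [hki k]
      exact Submodule.mem_orthogonal_singleton_iff_inner_left.mp (hle hy)
    -- choose t large
    have hev : ∀ᶠ t : ℝ in atTop, ∀ i : Fin d, 0 ≤ x i + t * s i := by
      rw [eventually_all]
      intro i
      by_cases hi : EuclideanSpace.single i (1 : ℝ) ∈ Vred u
      · have hsi0 : s i = 0 := by
          have h0 : ⟪s, EuclideanSpace.single i (1:ℝ)⟫ = 0 :=
            (Submodule.mem_orthogonal _ _).mp hi s hspan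
          rwa [EuclideanSpace.inner_single_right, one_mul, RCLike.conj_to_real] at h0
        have hx0 : 0 ≤ x i := by
          have := hpos i hi
          rwa [EuclideanSpace.inner_single_right, one_mul, RCLike.conj_to_real] at this
        filter_upwards with t
        rw [hsi0, mul_zero, add_zero]
        exact hx0
      · have hsipos := key i hi
        have htend : Tendsto (fun t : ℝ => x i + t * s i) atTop atTop :=
          tendsto_atTop_add_const_left _ _ (Tendsto.atTop_mul_const hsipos tendsto_id)
        exact htend.eventually_ge_atTop 0
    obtain ⟨t, ht⟩ := hev.exists
    refine ⟨t • s, ?_, ?_⟩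
    · exact Submodule.le_orthogonal_orthogonal _ (Submodule.smul_mem _ t hspan)
    · intro i
      have : (x + t • s) i = x i + t * s i := rfl
      rw [this]
      exact ht i
end
end

section
/- For every x ∈ Q, writing x = v + w with v ∈ V and w ∈ V^⊥, the following inclusion holds: {y ∈ V : y^{(1)} ∈ V_1^+ and ‖y^{(2)} − v^{(2)}‖ ≤ d(x)} ⊆ (Q − w) ∩ V. -/
open MeasureTheory Filter
open scoped RealInnerProductSpace

noncomputable section

/-- The subspace `V₁ = span{e_i : i ∈ I}` where `I = {i : e_i ∈ V}`. -/
def Vone {d : ℕ} {r : ℕ} (u : Fin r → EuclideanSpace ℝ (Fin d)) :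
    Submodule ℝ (EuclideanSpace ℝ (Fin d)) :=
  Submodule.span ℝ
    ((fun i => EuclideanSpace.single i (1 : ℝ)) ''
      {i : Fin d | EuclideanSpace.single i (1 : ℝ) ∈ Vred u})

/-- `V₂`, the orthogonal complement of `V₁` inside `V`. -/
def Vtwo {d : ℕ} {r : ℕ} (u : Fin r → EuclideanSpace ℝ (Fin d)) :
    Submodule ℝ (EuclideanSpace ℝ (Fin d)) :=
  Vred u ⊓ (Vone u)ᗮ

/-- For `x = v + w ∈ Q` (`v ∈ V`, `w ∈ V^⊥`),
`{y ∈ V : y⁽¹⁾ ∈ V₁^+ and ‖y⁽²⁾ − v⁽²⁾‖ ≤ d(x)} ⊆ (Q − w) ∩ V`.  The quantity `d(x)`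
is encoded by a real number `D` with `D ≤ x i` for all `i ∉ I ∪ I^⊥` (which is exactly
`D ≤ d(x)`, every such `D` — in particular the minimum itself — being covered; when
`I ∪ I^⊥ = {1,…,d}`, i.e. `d(x) = ∞`, the bound `D` is arbitrary). -/
theorem stmt7 (d : ℕ) (hd : 1 ≤ d)
    (μ : Measure (EuclideanSpace ℝ (Fin d))) [IsProbabilityMeasure μ]
    {r : ℕ} (hr : 1 ≤ r) (u : Fin r → EuclideanSpace ℝ (Fin d))
    (hu : MaximalAdmissible μ u)
    (x v w : EuclideanSpace ℝ (Fin d)) (hx : x ∈ Qpos d)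
    (hv : v ∈ Vred u) (hw : w ∈ (Vred u)ᗮ) (hvw : x = v + w)
    (v₁ v₂ : EuclideanSpace ℝ (Fin d)) (hv₁ : v₁ ∈ Vone u) (hv₂ : v₂ ∈ Vtwo u)
    (hv₁₂ : v = v₁ + v₂)
    (D : ℝ)
    (hD : ∀ i : Fin d, EuclideanSpace.single i (1 : ℝ) ∉ Vred u →
      EuclideanSpace.single i (1 : ℝ) ∉ (Vred u)ᗮ → D ≤ x i) :
    ∀ y y₁ y₂ : EuclideanSpace ℝ (Fin d), y₁ ∈ Vone u → y₂ ∈ Vtwo u → y = y₁ + y₂ →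
      (∀ i : Fin d, EuclideanSpace.single i (1 : ℝ) ∈ Vred u →
        0 ≤ ⟪y₁, EuclideanSpace.single i (1 : ℝ)⟫) →
      ‖y₂ - v₂‖ ≤ D →
      y + w ∈ Qpos d ∧ y ∈ Vred u := by
  intro y y₁ y₂ hy₁ hy₂ hy hpos hnorm
  have hVone_le : Vone u ≤ Vred u := by
    refine Submodule.span_le.2 ?_
    rintro _ ⟨i, hi, rfl⟩
    exact hi
  have hyV : y ∈ Vred u := by
    rw [hy]; exact (Vred u).add_mem (hVone_le hy₁) hy₂.1
  refine ⟨?_, hyV⟩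
  intro i
  have hcoord : ∀ z : EuclideanSpace ℝ (Fin d),
      ⟪z, EuclideanSpace.single i (1 : ℝ)⟫ = z i := by
    intro z
    rw [real_inner_comm]
    simp [EuclideanSpace.inner_single_left]
  have habs : ∀ z : EuclideanSpace ℝ (Fin d), |z i| ≤ ‖z‖ := by
    intro z
    calc |z i| = |⟪z, EuclideanSpace.single i (1 : ℝ)⟫| := by rw [hcoord]
      _ ≤ ‖z‖ * ‖EuclideanSpace.single i (1 : ℝ)‖ := abs_real_inner_le_norm _ _
      _ = ‖z‖ := by rw [EuclideanSpace.norm_single]; simp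
  have hadd : (y + w) i = y i + w i := rfl
  have hyi : y i = y₁ i + y₂ i := by rw [hy]; rfl
  have hvi : v i = v₁ i + v₂ i := by rw [hv₁₂]; rfl
  have hxi : x i = v i + w i := by rw [hvw]; rfl
  by_cases hiV : EuclideanSpace.single i (1 : ℝ) ∈ Vred u
  · have hw0 : w i = 0 := by
      have h := (Submodule.mem_orthogonal _ _).1 hw _ hiV
      rw [← hcoord w, real_inner_comm]; exact h
    have hy2 : y₂ i = 0 := by
      have he1 : EuclideanSpace.single i (1 : ℝ) ∈ Vone u :=
        Submodule.subset_span ⟨i, hiV, rfl⟩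
      have h := (Submodule.mem_orthogonal _ _).1 hy₂.2 _ he1
      rw [← hcoord y₂, real_inner_comm]; exact h
    have h1 : 0 ≤ y₁ i := by rw [← hcoord y₁]; exact hpos i hiV
    rw [hadd, hyi, hw0, hy2]; linarith
  · by_cases hiVp : EuclideanSpace.single i (1 : ℝ) ∈ (Vred u)ᗮ
    · have hy0 : y i = 0 := by
        have h := (Submodule.mem_orthogonal _ _).1 hiVp _ hyV
        rw [← hcoord y]; exact h
      have hv0 : v i = 0 := by
        have h := (Submodule.mem_orthogonal _ _).1 hiVp _ hv
        rw [← hcoord v]; exact h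
      have := hx i
      rw [hadd, hy0]
      rw [hv0] at hxi
      simpa [hxi] using this
    · have hDx : D ≤ x i := hD i hiV hiVp
      have hzero : ∀ z ∈ Vone u, z i = 0 := by
        intro z hz
        refine Submodule.span_induction ?_ ?_ ?_ ?_ hz
        · rintro _ ⟨j, hj, rfl⟩
          have hji : j ≠ i := by rintro rfl; exact hiV hj
          simp [EuclideanSpace.single_apply, hji.symm]
        · rfl
        · intro a b _ _ ha hb
          show a i + b i = 0
          rw [ha, hb, add_zero]
        · intro c a _ ha
          show c * a i = 0
          rw [ha, mul_zero]
      have hy10 : y₁ i = 0 := hzero _ hy₁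
      have hv10 : v₁ i = 0 := hzero _ hv₁
      have hb : |y₂ i - v₂ i| ≤ D := by
        have := habs (y₂ - v₂)
        have hsub : (y₂ - v₂) i = y₂ i - v₂ i := rfl
        rw [hsub] at this
        exact this.trans hnorm
      have hb' : -(x i) ≤ y₂ i - v₂ i := by
        have := (abs_le.1 hb).1
        linarith
      rw [hadd, hyi, hy10]
      rw [hv10] at hvi
      linarith
end
end

section
/- Assume (H') holds and m ∈ Q×{0}^q. Then for every x ∈ K ∩ G, (x + m + F) ∩ int(K) ∩ B_J(0,1) ≠ ∅, where int(K) denotes the interior of K. -/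
open MeasureTheory Filter Topology
open scoped RealInnerProductSpace

noncomputable section

/-- The shifted cone `K_δ = Q_δ × ℝ^q` in `ℝ^{p+q}` (so `K = K_0`). -/
def Kcone (p q : ℕ) (δ : ℝ) : Set (EuclideanSpace ℝ (Fin (p + q))) :=
  {x | ∀ i : Fin (p + q), (i : ℕ) < p → δ ≤ x i}

/-- The set `Q × {0}^q ⊆ ℝ^{p+q}`. -/
def QZero (p q : ℕ) : Set (EuclideanSpace ℝ (Fin (p + q))) :=
  {x | ∀ i : Fin (p + q), ((i : ℕ) < p → 0 ≤ x i) ∧ (p ≤ (i : ℕ) → x i = 0)}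

/-- `‖x‖_J = (Σ_{j ∈ J} x_j²)^{1/2}` where `J = {j : m_j = 0}`. -/
def normJ {d : ℕ} (m x : EuclideanSpace ℝ (Fin d)) : ℝ :=
  Real.sqrt (∑ j, if m j = 0 then x j ^ 2 else 0)

/-- The covariance matrix `Γ_{ij} = ∫ (y_i − m_i)(y_j − m_j) dμ(y)`. -/
def covMatrix {d : ℕ} (μ : Measure (EuclideanSpace ℝ (Fin d)))
    (m : EuclideanSpace ℝ (Fin d)) : Matrix (Fin d) (Fin d) ℝ :=
  Matrix.of fun i j => ∫ y, (y i - m i) * (y j - m j) ∂μ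

/-- `F = (ker Γ)^⊥`, the orthogonal complement of the kernel of the covariance matrix. -/
def Fsub {d : ℕ} (μ : Measure (EuclideanSpace ℝ (Fin d)))
    (m : EuclideanSpace ℝ (Fin d)) : Submodule ℝ (EuclideanSpace ℝ (Fin d)) :=
  (LinearMap.ker (Matrix.toEuclideanLin (covMatrix μ m)))ᗮ

/-- The smoothed support `G = ℝ₊ m + F`. -/
def Gset {d : ℕ} (μ : Measure (EuclideanSpace ℝ (Fin d)))
    (m : EuclideanSpace ℝ (Fin d)) : Set (EuclideanSpace ℝ (Fin d)) :=
  {z | ∃ lam : ℝ, 0 ≤ lam ∧ ∃ f ∈ Fsub μ m, z = lam • m + f}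

lemma isOpen_posSet {d : ℕ} (P : Fin d → Prop) :
    IsOpen {x : EuclideanSpace ℝ (Fin d) | ∀ i, P i → 0 < x i} := by
  have h : {x : EuclideanSpace ℝ (Fin d) | ∀ i, P i → 0 < x i}
      = ⋂ i, {x : EuclideanSpace ℝ (Fin d) | P i → 0 < x i} := by
    ext x; simp [Set.mem_iInter]
  rw [h]
  refine isOpen_iInter_of_finite fun i => ?_
  by_cases hP : P i
  · have h2 : {x : EuclideanSpace ℝ (Fin d) | P i → 0 < x i}
        = (fun x : EuclideanSpace ℝ (Fin d) => x i) ⁻¹' Set.Ioi 0 := by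
      ext x; simp [hP]
    rw [h2]
    exact isOpen_Ioi.preimage (EuclideanSpace.proj i).continuous
  · have h2 : {x : EuclideanSpace ℝ (Fin d) | P i → 0 < x i} = Set.univ := by
      ext x; simp [hP]
    rw [h2]; exact isOpen_univ

lemma exists_pos_in_Fsub (p q : ℕ)
    (μ : Measure (EuclideanSpace ℝ (Fin (p + q)))) [IsProbabilityMeasure μ]
    (m : EuclideanSpace ℝ (Fin (p + q)))
    (hint : Integrable (fun y => y) μ)
    (hsq : Integrable (fun y => ‖y‖ ^ 2) μ)
    (hm : m ∈ QZero p q)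
    (hH : ∀ u ∈ QZero p q, u ≠ 0 → μ {x | ⟪x, u⟫ ≤ 0} ≠ 1) :
    ∃ g ∈ Fsub μ m, ∀ i : Fin (p + q), (i : ℕ) < p → m i = 0 → 0 < g i := by
  classical
  by_contra hcon
  push_neg at hcon
  set U : Set (EuclideanSpace ℝ (Fin (p + q))) :=
    {x | ∀ i : Fin (p + q), ((i : ℕ) < p ∧ m i = 0) → 0 < x i} with hUdef
  have hUopen : IsOpen U := isOpen_posSet _
  have hUconv : Convex ℝ U := by
    intro a ha b hb s t hs ht hst i hi
    have ha' := ha i hi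
    have hb' := hb i hi
    have hco : (s • a + t • b) i = s * a i + t * b i := by
      simp [PiLp.add_apply, PiLp.smul_apply, smul_eq_mul]
    rw [hco]
    rcases eq_or_lt_of_le hs with h | h
    · have hts : t = 1 := by linarith
      rw [← h, hts]; simpa using hb'
    · exact add_pos_of_pos_of_nonneg (mul_pos h ha') (mul_nonneg ht hb'.le)
  have hdisj : Disjoint U ((Fsub μ m : Submodule ℝ _) : Set _) := by
    rw [Set.disjoint_left]
    intro g hgU hgF
    obtain ⟨i, hip, hmi, hle⟩ := hcon g hgF
    exact absurd (hgU i ⟨hip, hmi⟩) (not_lt.mpr hle)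
  obtain ⟨f, c, hfU, hfF⟩ :=
    geometric_hahn_banach_open hUconv hUopen (Fsub μ m).convex hdisj
  have hF0 : ∀ b ∈ Fsub μ m, f b = 0 := by
    intro b hb
    by_contra hne
    have h1 := hfF _ (Submodule.smul_mem _ ((c - 1) / f b) hb)
    rw [f.map_smul, smul_eq_mul, div_mul_cancel₀ _ hne] at h1
    have h2 := hfF b hb
    linarith
  have hc0 : c ≤ 0 := by simpa using hfF 0 (Submodule.zero_mem _)
  set w : EuclideanSpace ℝ (Fin (p + q)) :=
    (WithLp.equiv 2 (Fin (p + q) → ℝ)).symm (fun _ => 1) with hwdef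
  have hwi : ∀ i, w i = 1 := fun i => rfl
  have hwU : w ∈ U := by
    intro i _
    rw [hwi]; norm_num
  have hfw : f w < c := hfU w hwU
  have hfwneg : f w < 0 := lt_of_lt_of_le hfw hc0
  set e : Fin (p + q) → EuclideanSpace ℝ (Fin (p + q)) :=
    fun j => EuclideanSpace.single j (1 : ℝ) with hedef
  have hei : ∀ j i, (e j) i = if i = j then 1 else 0 := by
    intro j i; rw [hedef]; exact EuclideanSpace.single_apply j 1 i
  have h1 : ∀ j : Fin (p + q), ¬((j : ℕ) < p ∧ m j = 0) → f (e j) = 0 := by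
    intro j hj
    by_contra hne
    have hmem : w + ((c - f w) / f (e j)) • e j ∈ U := by
      intro i hi
      have hij : i ≠ j := fun h => hj (h ▸ hi)
      have hco : (w + ((c - f w) / f (e j)) • e j) i
          = 1 + ((c - f w) / f (e j)) * (e j) i := by
        rw [PiLp.add_apply, PiLp.smul_apply, smul_eq_mul, hwi]
      rw [hco, hei, if_neg hij]
      norm_num
    have hlt := hfU _ hmem
    rw [map_add, f.map_smul, smul_eq_mul, div_mul_cancel₀ _ hne] at hlt
    linarith
  have h2 : ∀ j : Fin (p + q), (j : ℕ) < p → m j = 0 → f (e j) ≤ 0 := by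
    intro j hjp hjm
    by_contra hpos
    push_neg at hpos
    set τ : ℝ := max 0 ((c - f w) / f (e j)) with hτdef
    have hτ0 : (0 : ℝ) ≤ τ := le_max_left _ _
    have hmem : w + τ • e j ∈ U := by
      intro i _
      have hco : (w + τ • e j) i = 1 + τ * (e j) i := by
        rw [PiLp.add_apply, PiLp.smul_apply, smul_eq_mul, hwi]
      rw [hco, hei]
      by_cases hij : i = j
      · rw [if_pos hij]; linarith
      · rw [if_neg hij]; norm_num
    have hlt := hfU _ hmem
    rw [map_add, f.map_smul, smul_eq_mul] at hlt
    have hd : (c - f w) / f (e j) ≤ τ := le_max_right _ _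
    have hd2 : c - f w ≤ τ * f (e j) := by rwa [div_le_iff₀ hpos] at hd
    linarith
  set u0 : EuclideanSpace ℝ (Fin (p + q)) :=
    (InnerProductSpace.toDual ℝ _).symm f with hu0def
  have hu0 : ∀ x, ⟪u0, x⟫ = f x := fun x => InnerProductSpace.toDual_symm_apply
  set u : EuclideanSpace ℝ (Fin (p + q)) := -u0 with hudef
  have hui : ∀ i, u i = -f (e i) := by
    intro i
    have h3 : ⟪u0, e i⟫ = f (e i) := hu0 _
    have h4 : ⟪u0, EuclideanSpace.single i (1 : ℝ)⟫ = u0 i := by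
      rw [EuclideanSpace.inner_single_right]; simp
    rw [hedef] at h3
    rw [hudef, PiLp.neg_apply, ← h4, h3, hedef]
  have hinner : ∀ x, ⟪x, u⟫ = -f x := by
    intro x
    rw [real_inner_comm, hudef, inner_neg_left, hu0 x]
  have huQ : u ∈ QZero p q := by
    intro i
    constructor
    · intro hip
      by_cases hmi : m i = 0
      · rw [hui]
        exact neg_nonneg.mpr (h2 i hip hmi)
      · rw [hui, h1 i (fun h => hmi h.2), neg_zero]
    · intro hpi
      rw [hui, h1 i (fun h => absurd h.1 (by omega)), neg_zero]
  have hune : u ≠ 0 := by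
    intro h
    have h3 := hinner w
    rw [h, inner_zero_right] at h3
    have : f w = 0 := by linarith [h3]
    linarith
  have huker : Matrix.toEuclideanLin (covMatrix μ m) u = 0 := by
    have hmem : u ∈ (Fsub μ m)ᗮ := by
      rw [Submodule.mem_orthogonal]
      intro v hv
      rw [hinner v, hF0 v hv, neg_zero]
    rw [Fsub, Submodule.orthogonal_orthogonal] at hmem
    exact hmem
  have hrow : ∀ i, ∑ j, covMatrix μ m i j * u j = 0 := by
    intro i
    have h3 : Matrix.mulVec (covMatrix μ m) ((WithLp.equiv 2 _) u) = 0 := by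
      have h4 := congrArg (WithLp.equiv 2 (Fin (p + q) → ℝ)) huker
      exact h4
    have h5 := congrFun h3 i
    simpa [Matrix.mulVec, dotProduct] using h5
  -- integrability of products of coordinates
  have hintij : ∀ i j : Fin (p + q),
      Integrable (fun y : EuclideanSpace ℝ (Fin (p + q)) => (y i - m i) * (y j - m j)) μ := by
    intro i j
    have hb : Integrable
        (fun y : EuclideanSpace ℝ (Fin (p + q)) => ‖y‖ ^ 2 + (2 * ‖m‖) * ‖y‖ + ‖m‖ ^ 2) μ :=
      (hsq.add (hint.norm.const_mul _)).add (integrable_const _)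
    refine hb.mono' ?_ ?_
    · exact ((((EuclideanSpace.proj i).continuous.sub continuous_const)).mul
        (((EuclideanSpace.proj j).continuous.sub continuous_const))).aestronglyMeasurable
    · refine Filter.Eventually.of_forall fun y => ?_
      have hcoord : ∀ k : Fin (p + q), |y k - m k| ≤ ‖y‖ + ‖m‖ := by
        intro k
        have hc1 : ⟪y - m, EuclideanSpace.single k (1 : ℝ)⟫ = (y - m) k := by
          rw [EuclideanSpace.inner_single_right]; simp
        have hc2 := abs_real_inner_le_norm (y - m) (EuclideanSpace.single k (1 : ℝ))
        rw [hc1, EuclideanSpace.norm_single, norm_one, mul_one] at hc2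
        have hc3 : (y - m) k = y k - m k := rfl
        rw [hc3] at hc2
        exact hc2.trans (norm_sub_le _ _)
      have hmono := mul_le_mul (hcoord i) (hcoord j) (abs_nonneg _)
        (by positivity)
      calc ‖(y i - m i) * (y j - m j)‖ = |y i - m i| * |y j - m j| := by
            rw [Real.norm_eq_abs, abs_mul]
        _ ≤ (‖y‖ + ‖m‖) * (‖y‖ + ‖m‖) := hmono
        _ = ‖y‖ ^ 2 + (2 * ‖m‖) * ‖y‖ + ‖m‖ ^ 2 := by ring
  set S : EuclideanSpace ℝ (Fin (p + q)) → ℝ :=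
    fun y => ∑ i, ∑ j, (u i * u j) * ((y i - m i) * (y j - m j)) with hSdef
  have hS_int : Integrable S μ :=
    integrable_finset_sum _ fun i _ =>
      integrable_finset_sum _ fun j _ => ((hintij i j).const_mul _)
  have hSq : ∀ y, (∑ i, u i * (y i - m i)) ^ 2 = S y := by
    intro y
    rw [hSdef, sq, Finset.sum_mul_sum]
    refine Finset.sum_congr rfl fun i _ => Finset.sum_congr rfl fun j _ => by ring
  have hI : ∫ y, S y ∂μ = ∑ i, ∑ j, (u i * u j) * covMatrix μ m i j := by
    rw [hSdef, integral_finset_sum _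
      (fun i _ => integrable_finset_sum _ fun j _ => ((hintij i j).const_mul _))]
    refine Finset.sum_congr rfl fun i _ => ?_
    rw [integral_finset_sum _ (fun j _ => (hintij i j).const_mul _)]
    refine Finset.sum_congr rfl fun j _ => ?_
    rw [integral_const_mul]
    rfl
  have hsum0 : ∑ i, ∑ j, (u i * u j) * covMatrix μ m i j = 0 := by
    refine Finset.sum_eq_zero fun i _ => ?_
    have h3 : ∑ j, (u i * u j) * covMatrix μ m i j
        = u i * ∑ j, covMatrix μ m i j * u j := by
      rw [Finset.mul_sum]
      exact Finset.sum_congr rfl fun j _ => by ring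
    rw [h3, hrow i, mul_zero]
  have hI0 : ∫ y, S y ∂μ = 0 := by rw [hI, hsum0]
  have hae : S =ᵐ[μ] 0 :=
    (integral_eq_zero_iff_of_nonneg_ae
      (Filter.Eventually.of_forall fun y => by
        have := sq_nonneg (∑ i, u i * (y i - m i))
        rw [hSq y] at this
        exact this) hS_int).mp hI0
  have hae2 : ∀ᵐ y ∂μ, ∑ i, u i * (y i - m i) = 0 := by
    refine hae.mono fun y hy => ?_
    have h3 : (∑ i, u i * (y i - m i)) ^ 2 = 0 := by
      rw [hSq y]; simpa using hy
    exact pow_eq_zero_iff two_ne_zero |>.mp h3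
  have hmu : ∑ i, u i * m i = 0 := by
    refine Finset.sum_eq_zero fun i _ => ?_
    by_cases hmi : m i = 0
    · rw [hmi, mul_zero]
    · rw [hui, h1 i (fun h => hmi h.2), neg_zero, zero_mul]
  have hae3 : ∀ᵐ y ∂μ, y ∈ {x : EuclideanSpace ℝ (Fin (p + q)) | ⟪x, u⟫ ≤ 0} := by
    refine hae2.mono fun y hy => ?_
    have hinner_eq : ⟪y, u⟫ = ∑ i, y i * u i := by
      rw [PiLp.inner_apply]
      exact Finset.sum_congr rfl fun i _ => by
        simp [RCLike.inner_apply, mul_comm]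
    have h4 : ⟪y, u⟫ = (∑ i, u i * (y i - m i)) + ∑ i, u i * m i := by
      rw [hinner_eq, ← Finset.sum_add_distrib]
      exact Finset.sum_congr rfl fun i _ => by ring
    have : ⟪y, u⟫ = 0 := by rw [h4, hy, hmu, add_zero]
    exact le_of_eq this
  have hSmeas : MeasurableSet {x : EuclideanSpace ℝ (Fin (p + q)) | ⟪x, u⟫ ≤ 0} :=
    measurableSet_le (Continuous.measurable (Continuous.inner continuous_id continuous_const))
      measurable_const
  have hμ1 : μ {x : EuclideanSpace ℝ (Fin (p + q)) | ⟪x, u⟫ ≤ 0} = 1 := by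
    refine (prob_compl_eq_zero_iff hSmeas).mp ?_
    rw [Set.compl_setOf]
    exact hae3
  exact hH u huQ hune hμ1

/-- Under (H') and `m ∈ Q×{0}^q`, for every `x ∈ K ∩ G`,
`(x + m + F) ∩ int(K) ∩ B_J(0,1) ≠ ∅`. -/
theorem stmt12 (p q : ℕ) (hp : 1 ≤ p)
    (μ : Measure (EuclideanSpace ℝ (Fin (p + q)))) [IsProbabilityMeasure μ]
    (m : EuclideanSpace ℝ (Fin (p + q)))
    (hint : Integrable (fun y => y) μ) (hmean : ∫ y, y ∂μ = m)
    (hsq : Integrable (fun y => ‖y‖ ^ 2) μ)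
    (hm : m ∈ QZero p q)
    (hH : ∀ u ∈ QZero p q, u ≠ 0 → μ {x | ⟪x, u⟫ ≤ 0} ≠ 1) :
    ∀ x ∈ Kcone p q 0 ∩ Gset μ m,
      ({z | ∃ f ∈ Fsub μ m, z = x + m + f} ∩ interior (Kcone p q 0) ∩
        {z | normJ m z < 1}).Nonempty := by
  classical
  intro x hx
  obtain ⟨hxK, lam, hlam, f₀, hf₀F, hxeq⟩ := hx
  obtain ⟨g, hgF, hg⟩ := exists_pos_in_Fsub p q μ m hint hsq hm hH
  set A : ℝ := ∑ j, (if m j = 0 then g j ^ 2 else 0) with hAdef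
  -- eventually in 𝓝[>] 0 all conditions hold
  have hev1 : ∀ᶠ t in 𝓝[>] (0 : ℝ),
      ∀ i : Fin (p + q), (i : ℕ) < p → 0 < (lam + 1) * m i + t * g i := by
    rw [eventually_all]
    intro i
    by_cases hip : (i : ℕ) < p
    · by_cases hmi : m i = 0
      · refine eventually_mem_nhdsWithin.mono fun t ht hip' => ?_
        have ht0 : (0 : ℝ) < t := ht
        rw [hmi, mul_zero, zero_add]
        exact mul_pos ht0 (hg i hip hmi)
      · have hmi0 : 0 < m i := lt_of_le_of_ne ((hm i).1 hip) (Ne.symm hmi)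
        have hpos : 0 < (lam + 1) * m i := mul_pos (by linarith) hmi0
        have htend : Filter.Tendsto (fun t : ℝ => (lam + 1) * m i + t * g i) (𝓝 0)
            (𝓝 ((lam + 1) * m i + 0 * g i)) :=
          Continuous.tendsto (by fun_prop) 0
        rw [zero_mul, add_zero] at htend
        exact ((htend.eventually (eventually_gt_nhds hpos)).filter_mono
          nhdsWithin_le_nhds).mono fun t ht _ => ht
    · exact Filter.Eventually.of_forall fun t hip' => absurd hip' hip
  have hev2 : ∀ᶠ t in 𝓝[>] (0 : ℝ), t ^ 2 * A < 1 := by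
    have htend : Filter.Tendsto (fun t : ℝ => t ^ 2 * A) (𝓝 0) (𝓝 ((0 : ℝ) ^ 2 * A)) :=
      Continuous.tendsto (by fun_prop) 0
    have h0 : (0 : ℝ) ^ 2 * A = 0 := by ring
    rw [h0] at htend
    exact (htend.eventually (eventually_lt_nhds one_pos)).filter_mono nhdsWithin_le_nhds
  obtain ⟨t, ht1, ht2, ht0⟩ := (hev1.and (hev2.and eventually_mem_nhdsWithin)).exists
  have ht0' : (0 : ℝ) < t := ht0
  -- the candidate point
  set z : EuclideanSpace ℝ (Fin (p + q)) := (lam + 1) • m + t • g with hzdef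
  have hzeq : x + m + (t • g - f₀) = z := by
    rw [hxeq, hzdef]
    module
  have hzi : ∀ i, z i = (lam + 1) * m i + t * g i := by
    intro i
    rw [hzdef, PiLp.add_apply, PiLp.smul_apply, PiLp.smul_apply, smul_eq_mul, smul_eq_mul]
  refine ⟨z, ⟨⟨t • g - f₀, Submodule.sub_mem _ (Submodule.smul_mem _ t hgF) hf₀F,
    hzeq.symm⟩, ?_⟩, ?_⟩
  · -- interior membership
    have hsub : {y : EuclideanSpace ℝ (Fin (p + q)) | ∀ i : Fin (p + q), (i : ℕ) < p → 0 < y i}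
        ⊆ interior (Kcone p q 0) := by
      refine interior_maximal ?_ (isOpen_posSet fun i : Fin (p + q) => (i : ℕ) < p)
      intro y hy i hip
      exact (hy i hip).le
    refine hsub fun i hip => ?_
    rw [hzi]
    exact ht1 i hip
  · -- normJ bound
    have hsum : ∑ j, (if m j = 0 then z j ^ 2 else 0) = t ^ 2 * A := by
      rw [hAdef, Finset.mul_sum]
      refine Finset.sum_congr rfl fun j _ => ?_
      by_cases hmj : m j = 0
      · rw [if_pos hmj, if_pos hmj, hzi, hmj]
        ring
      · rw [if_neg hmj, if_neg hmj, mul_zero]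
    show normJ m z < 1
    rw [normJ, hsum]
    rw [show (1 : ℝ) = Real.sqrt 1 by rw [Real.sqrt_one]]
    refine Real.sqrt_lt_sqrt ?_ ht2
    positivity
end
end

section
/- For every sequence (x_n) in K ∩ cl(B_J(0,1)) ∩ G there exists a bounded sequence (y_n) in K ∩ cl(B_J(0,1)) ∩ G such that for all n, y_n ≤ x_n coordinatewise and y_n^{(J)} = x_n^{(J)}, where x^{(J)} denotes the orthogonal projection of x onto span{e_j : j ∈ J}. -/
open MeasureTheory Filter
open scoped RealInnerProductSpace Topology

noncomputable section

namespace Aux13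

variable {d : ℕ} (F : Submodule ℝ (EuclideanSpace ℝ (Fin d))) (m : EuclideanSpace ℝ (Fin d))

def mp : EuclideanSpace ℝ (Fin d) := (Submodule.orthogonalProjectionOnto Fᗮ m : EuclideanSpace ℝ (Fin d))

def lam (z : EuclideanSpace ℝ (Fin d)) : ℝ := ⟪z, mp F m⟫ / ‖mp F m‖ ^ 2

def Gs : Set (EuclideanSpace ℝ (Fin d)) := {z | ∃ l : ℝ, 0 ≤ l ∧ ∃ f ∈ F, z = l • m + f}

lemma lam_smul (a : ℝ) (z : EuclideanSpace ℝ (Fin d)) : lam F m (a • z) = a * lam F m z := by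
  unfold lam; rw [real_inner_smul_left]; ring

lemma lam_sub (y z : EuclideanSpace ℝ (Fin d)) : lam F m (y - z) = lam F m y - lam F m z := by
  unfold lam; rw [inner_sub_left]; ring

lemma lam_continuous : Continuous (lam F m) := by
  unfold lam
  exact (continuous_id.inner continuous_const).div_const _

lemma mp_mem_orth : mp F m ∈ Fᗮ := (Submodule.orthogonalProjectionOnto Fᗮ m).2

lemma sub_mp_mem : m - mp F m ∈ F := by
  have h := Submodule.starProjection_add_starProjection_orthogonal (K := F) m
  have h3 : (Submodule.orthogonalProjectionOnto F m : EuclideanSpace ℝ (Fin d)) = m - mp F m :=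
    eq_sub_of_add_eq h
  rw [← h3]; exact (Submodule.orthogonalProjectionOnto F m).2

lemma inner_m_mp : ⟪m, mp F m⟫ = ‖mp F m‖ ^ 2 := by
  have h0 : ⟪m - mp F m, mp F m⟫ = 0 :=
    (Submodule.mem_orthogonal F (mp F m)).1 (mp_mem_orth F m) _ (sub_mp_mem F m)
  have := inner_sub_left (𝕜 := ℝ) m (mp F m) (mp F m)
  rw [h0, real_inner_self_eq_norm_sq] at this
  linarith

lemma inner_f_mp {f : EuclideanSpace ℝ (Fin d)} (hf : f ∈ F) : ⟪f, mp F m⟫ = 0 :=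
  (Submodule.mem_orthogonal F (mp F m)).1 (mp_mem_orth F m) _ hf

lemma mem_Gs_iff (z : EuclideanSpace ℝ (Fin d)) :
    z ∈ Gs F m ↔ 0 ≤ lam F m z ∧ z - lam F m z • m ∈ F := by
  by_cases hmp : mp F m = 0
  · have hmF : m ∈ F := by
      have : m ∈ Fᗮᗮ := Submodule.orthogonalProjectionOnto_eq_zero_iff.1 (by
        apply Subtype.ext; exact hmp)
      rwa [Submodule.orthogonal_orthogonal] at this
    have hlz : ∀ w : EuclideanSpace ℝ (Fin d), lam F m w = 0 := by
      intro w; unfold lam; rw [hmp]; simp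
    constructor
    · rintro ⟨l, hl, f, hf, rfl⟩
      refine ⟨by rw [hlz], ?_⟩
      rw [hlz]; simpa using F.add_mem (F.smul_mem l hmF) hf
    · rintro ⟨-, hz⟩
      rw [hlz] at hz; simp only [zero_smul, sub_zero] at hz
      exact ⟨0, le_refl 0, z, hz, by simp⟩
  · have hn : ‖mp F m‖ ^ 2 ≠ 0 := by
      simpa using hmp
    constructor
    · rintro ⟨l, hl, f, hf, rfl⟩
      have hlam : lam F m (l • m + f) = l := by
        unfold lam
        rw [inner_add_left, real_inner_smul_left, inner_f_mp F m hf, inner_m_mp F m]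
        rw [add_zero, mul_div_assoc, div_self hn, mul_one]
      rw [hlam]
      exact ⟨hl, by simpa using hf⟩
    · rintro ⟨h0, hz⟩
      exact ⟨lam F m z, h0, z - lam F m z • m, hz, by abel⟩

lemma isClosed_Gs : IsClosed (Gs F m) := by
  have : Gs F m = {z | 0 ≤ lam F m z ∧ z - lam F m z • m ∈ F} := Set.ext (mem_Gs_iff F m)
  rw [this]
  apply IsClosed.inter
  · exact isClosed_le continuous_const (lam_continuous F m)
  · exact IsClosed.preimage (continuous_id.sub ((lam_continuous F m).smul continuous_const))
      (Submodule.closed_of_finiteDimensional F)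



lemma continuous_coord (i : Fin d) : Continuous (fun z : EuclideanSpace ℝ (Fin d) => z i) :=
  (EuclideanSpace.proj (𝕜 := ℝ) i).continuous

def Tset (p : ℕ) (x : EuclideanSpace ℝ (Fin d)) : Set (EuclideanSpace ℝ (Fin d)) :=
  {y | (∀ i : Fin d, (i : ℕ) < p → 0 ≤ y i) ∧ y ∈ Gs F m ∧
    (∀ i, y i ≤ x i) ∧ (∀ j, m j = 0 → y j = x j)}

lemma isClosed_Tset (p : ℕ) (x : EuclideanSpace ℝ (Fin d)) : IsClosed (Tset F m p x) := by
  have h1 : IsClosed {y : EuclideanSpace ℝ (Fin d) | ∀ i : Fin d, (i : ℕ) < p → 0 ≤ y i} := by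
    have : {y : EuclideanSpace ℝ (Fin d) | ∀ i : Fin d, (i : ℕ) < p → 0 ≤ y i}
        = ⋂ i : Fin d, {y | (i : ℕ) < p → 0 ≤ y i} := by
      ext y; simp [Set.mem_iInter]
    rw [this]
    refine isClosed_iInter fun i => ?_
    by_cases hP : (i : ℕ) < p
    · simp only [hP, true_implies]
      exact isClosed_le continuous_const (continuous_coord i)
    · simp only [hP, false_implies, Set.setOf_true]
      exact isClosed_univ
  have h3 : IsClosed {y : EuclideanSpace ℝ (Fin d) | ∀ i, y i ≤ x i} := by
    have : {y : EuclideanSpace ℝ (Fin d) | ∀ i, y i ≤ x i}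
        = ⋂ i : Fin d, {y | y i ≤ x i} := by ext y; simp [Set.mem_iInter]
    rw [this]
    exact isClosed_iInter fun i => isClosed_le (continuous_coord i) continuous_const
  have h4 : IsClosed {y : EuclideanSpace ℝ (Fin d) | ∀ j, m j = 0 → y j = x j} := by
    have : {y : EuclideanSpace ℝ (Fin d) | ∀ j, m j = 0 → y j = x j}
        = ⋂ j : Fin d, {y | m j = 0 → y j = x j} := by ext y; simp [Set.mem_iInter]
    rw [this]
    refine isClosed_iInter fun j => ?_
    by_cases hP : m j = 0
    · simp only [hP, true_implies]
      exact isClosed_eq (continuous_coord j) continuous_const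
    · simp only [hP, false_implies, Set.setOf_true]
      exact isClosed_univ
  exact (h1.inter ((isClosed_Gs F m).inter (h3.inter h4)))

lemma abs_le_one_of_normJ {x : EuclideanSpace ℝ (Fin d)} {j : Fin d}
    (hj : m j = 0) (h : normJ m x ≤ 1) : |x j| ≤ 1 := by
  have hterm : ∀ j' : Fin d, 0 ≤ (if m j' = 0 then x j' ^ 2 else 0) := by
    intro j'; by_cases h' : m j' = 0 <;> simp [h'] <;> positivity
  have hsum0 : 0 ≤ ∑ j', if m j' = 0 then x j' ^ 2 else 0 :=
    Finset.sum_nonneg fun j' _ => hterm j'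
  have hsingle : x j ^ 2 ≤ ∑ j', if m j' = 0 then x j' ^ 2 else 0 := by
    have := Finset.single_le_sum (f := fun j' => if m j' = 0 then x j' ^ 2 else 0)
      (fun j' _ => hterm j') (Finset.mem_univ j)
    simpa [hj] using this
  have hsum1 : (∑ j', if m j' = 0 then x j' ^ 2 else 0) ≤ 1 := by
    have h2 : Real.sqrt (∑ j', if m j' = 0 then x j' ^ 2 else 0) ≤ 1 := h
    nlinarith [Real.sq_sqrt hsum0, Real.sqrt_nonneg (∑ j', if m j' = 0 then x j' ^ 2 else 0)]
  have : |x j| ^ 2 ≤ 1 ^ 2 := by rw [sq_abs]; simpa using le_trans hsingle hsum1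
  exact le_of_pow_le_pow_left₀ two_ne_zero (by norm_num) this

lemma key (p : ℕ) (hm0 : ∀ i : Fin d, p ≤ (i : ℕ) → m i = 0) :
    ∃ C : ℝ, ∀ x : EuclideanSpace ℝ (Fin d),
      (∀ i : Fin d, (i : ℕ) < p → 0 ≤ x i) → normJ m x ≤ 1 → x ∈ Gs F m →
      ∃ y ∈ Tset F m p x, ‖y‖ ≤ C := by
  by_contra hcon
  push_neg at hcon
  choose x hxK hxJ hxG hxbig using fun k : ℕ => hcon (k : ℝ)
  set S : ℕ → Set (EuclideanSpace ℝ (Fin d)) :=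
    fun k => Tset F m p (x k) ∩ Metric.closedBall 0 ‖x k‖ with hS
  have hSne : ∀ k, (S k).Nonempty := fun k =>
    ⟨x k, ⟨hxK k, hxG k, fun i => le_refl _, fun j _ => rfl⟩,
      by simp [Metric.mem_closedBall]⟩
  have hScomp : ∀ k, IsCompact (S k) := fun k =>
    (isCompact_closedBall _ _).inter_left (isClosed_Tset F m p (x k))
  have hmin : ∀ k, ∃ y ∈ S k, IsMinOn (fun z => ‖z‖) (S k) y := fun k =>
    (hScomp k).exists_isMinOn (hSne k) continuous_norm.continuousOn
  choose y hyS hymin using hmin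
  have hyT : ∀ k, y k ∈ Tset F m p (x k) := fun k => (hyS k).1
  have hyB : ∀ k, ‖y k‖ ≤ ‖x k‖ := fun k => by
    have := (hyS k).2; rwa [mem_closedBall_zero_iff] at this
  have hybig : ∀ k : ℕ, (k : ℝ) < ‖y k‖ := fun k => hxbig k (y k) (hyT k)
  have hypos : ∀ k, 0 < ‖y k‖ := fun k => lt_of_le_of_lt (Nat.cast_nonneg k) (hybig k)
  set v : ℕ → EuclideanSpace ℝ (Fin d) := fun k => ‖y k‖⁻¹ • y k with hv
  have hvcoord : ∀ k i, v k i = ‖y k‖⁻¹ * y k i := by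
    intro k i; simp [hv]
  have hvnorm : ∀ k, ‖v k‖ = 1 := by
    intro k
    rw [hv, norm_smul, norm_inv, norm_norm]
    exact inv_mul_cancel₀ (hypos k).ne'
  have hvsphere : ∀ k, v k ∈ Metric.sphere (0 : EuclideanSpace ℝ (Fin d)) 1 := fun k =>
    mem_sphere_zero_iff_norm.2 (hvnorm k)
  obtain ⟨w, hwsp, φ, hφ, hconv⟩ :=
    (isCompact_sphere (0 : EuclideanSpace ℝ (Fin d)) 1).tendsto_subseq hvsphere
  have hwnorm : ‖w‖ = 1 := mem_sphere_zero_iff_norm.1 hwsp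
  have hytend : Tendsto (fun k => ‖y (φ k)‖) atTop atTop := by
    refine tendsto_atTop_mono (fun k => ?_) tendsto_natCast_atTop_atTop
    exact le_of_lt (lt_of_le_of_lt (Nat.cast_le.2 hφ.le_apply) (hybig (φ k)))
  have hcoord : ∀ i, Tendsto (fun k => v (φ k) i) atTop (𝓝 (w i)) := fun i =>
    ((continuous_coord i).tendsto w).comp hconv
  have hwpos : ∀ i : Fin d, (i : ℕ) < p → 0 ≤ w i := by
    intro i hi
    refine ge_of_tendsto' (hcoord i) fun k => ?_
    rw [hvcoord]
    exact mul_nonneg (inv_nonneg.2 (norm_nonneg _)) ((hyT (φ k)).1 i hi)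
  have hwJ : ∀ j, m j = 0 → w j = 0 := by
    intro j hj
    have h0 : Tendsto (fun k => v (φ k) j) atTop (𝓝 0) := by
      refine squeeze_zero_norm (a := fun k => ‖y (φ k)‖⁻¹) (fun k => ?_)
        hytend.inv_tendsto_atTop
      show ‖v (φ k) j‖ ≤ ‖y (φ k)‖⁻¹
      rw [hvcoord, (hyT (φ k)).2.2.2 j hj]
      have habs : |x (φ k) j| ≤ 1 := abs_le_one_of_normJ m hj (hxJ (φ k))
      have h2 : 0 ≤ ‖y (φ k)‖⁻¹ := inv_nonneg.2 (norm_nonneg _)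
      calc ‖‖y (φ k)‖⁻¹ * x (φ k) j‖ = ‖y (φ k)‖⁻¹ * |x (φ k) j| := by
            rw [norm_mul, Real.norm_eq_abs, Real.norm_eq_abs, abs_of_nonneg h2]
      _ ≤ ‖y (φ k)‖⁻¹ * 1 := mul_le_mul_of_nonneg_left habs h2
      _ = ‖y (φ k)‖⁻¹ := mul_one _
    exact tendsto_nhds_unique (hcoord j) h0
  have hylam : ∀ k, 0 ≤ lam F m (y k) ∧ y k - lam F m (y k) • m ∈ F :=
    fun k => (mem_Gs_iff F m _).1 (hyT k).2.1
  have hvlam : ∀ k, lam F m (v k) = ‖y k‖⁻¹ * lam F m (y k) := fun k => lam_smul F m _ _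
  have hlamtend : Tendsto (fun k => lam F m (v (φ k))) atTop (𝓝 (lam F m w)) :=
    ((lam_continuous F m).tendsto w).comp hconv
  have hwlam : 0 ≤ lam F m w := by
    refine ge_of_tendsto' hlamtend fun k => ?_
    rw [hvlam]
    exact mul_nonneg (inv_nonneg.2 (norm_nonneg _)) (hylam (φ k)).1
  have hwF : w - lam F m w • m ∈ F := by
    have hcont : Continuous (fun z : EuclideanSpace ℝ (Fin d) => z - lam F m z • m) :=
      continuous_id.sub ((lam_continuous F m).smul continuous_const)
    refine (Submodule.closed_of_finiteDimensional F).mem_of_tendsto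
      ((hcont.tendsto w).comp hconv) (Filter.Eventually.of_forall fun k => ?_)
    show v (φ k) - lam F m (v (φ k)) • m ∈ (F : Set (EuclideanSpace ℝ (Fin d)))
    have : v (φ k) - lam F m (v (φ k)) • m
        = ‖y (φ k)‖⁻¹ • (y (φ k) - lam F m (y (φ k)) • m) := by
      rw [hvlam, smul_sub, smul_smul]
    rw [this]
    exact F.smul_mem _ (hylam (φ k)).2
  have hinner : Tendsto (fun k => ⟪v (φ k), w⟫) atTop (𝓝 1) := by
    have hcw : Continuous fun z : EuclideanSpace ℝ (Fin d) => ⟪z, w⟫ :=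
      continuous_id.inner continuous_const
    have h1 := (hcw.tendsto w).comp hconv
    rw [real_inner_self_eq_norm_sq, hwnorm] at h1
    rw [one_pow] at h1
    exact h1
  have ev1 : ∀ᶠ k in atTop, 1 / 2 ≤ ⟪v (φ k), w⟫ :=
    hinner.eventually (eventually_ge_nhds (by norm_num))
  have ev2 : ∀ᶠ k in atTop, (2 : ℝ) ≤ ‖y (φ k)‖ := hytend.eventually_ge_atTop 2
  have ev3 : ∀ᶠ k in atTop, ∀ i : Fin d, 0 < w i → w i ≤ y (φ k) i := by
    rw [eventually_all]
    intro i
    by_cases hwi : 0 < w i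
    · have hco : Tendsto (fun k => y (φ k) i) atTop atTop := by
        have heq : (fun k => y (φ k) i) = fun k => ‖y (φ k)‖ * v (φ k) i := by
          funext k
          rw [hvcoord, ← mul_assoc, mul_inv_cancel₀ (hypos (φ k)).ne', one_mul]
        rw [heq]
        exact hytend.atTop_mul_pos hwi (hcoord i)
      filter_upwards [hco.eventually_ge_atTop (w i)] with k hk _
      exact hk
    · filter_upwards with k hk
      exact absurd hk hwi
  have ev4 : ∀ᶠ k in atTop, 0 < lam F m w → lam F m w ≤ lam F m (y (φ k)) := by
    by_cases hwl : 0 < lam F m w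
    · have hco : Tendsto (fun k => lam F m (y (φ k))) atTop atTop := by
        have heq : (fun k => lam F m (y (φ k))) = fun k => ‖y (φ k)‖ * lam F m (v (φ k)) := by
          funext k
          rw [hvlam, ← mul_assoc, mul_inv_cancel₀ (hypos (φ k)).ne', one_mul]
        rw [heq]
        exact hytend.atTop_mul_pos hwl hlamtend
      filter_upwards [hco.eventually_ge_atTop (lam F m w)] with k hk _
      exact hk
    · filter_upwards with k hk
      exact absurd hk hwl
  obtain ⟨k, h1, h2, h3, h4⟩ := (ev1.and (ev2.and (ev3.and ev4))).exists
  set n := φ k with hn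
  have hwge : ∀ i : Fin d, 0 ≤ w i := by
    intro i
    by_cases hi : (i : ℕ) < p
    · exact hwpos i hi
    · rw [hwJ i (hm0 i (le_of_not_gt hi))]
  set z := y n - w with hz
  have hzcoord : ∀ i, z i = y n i - w i := by intro i; simp [hz]
  have hzT : z ∈ Tset F m p (x n) := by
    refine ⟨?_, ?_, ?_, ?_⟩
    · intro i hi
      rcases (hwpos i hi).lt_or_eq with hlt | heq
      · have := h3 i hlt
        rw [hzcoord]; linarith
      · rw [hzcoord, ← heq, sub_zero]
        exact (hyT n).1 i hi
    · rw [mem_Gs_iff, hz, lam_sub]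
      constructor
      · rcases hwlam.lt_or_eq with hlt | heq
        · linarith [h4 hlt]
        · rw [← heq, sub_zero]; exact (hylam n).1
      · have halg : y n - w - (lam F m (y n) - lam F m w) • m
            = (y n - lam F m (y n) • m) - (w - lam F m w • m) := by
          rw [sub_smul]; abel
        rw [halg]
        exact F.sub_mem (hylam n).2 hwF
    · intro i
      have := hwge i
      have hyx := (hyT n).2.2.1 i
      rw [hzcoord]; linarith
    · intro j hj
      rw [hzcoord, hwJ j hj, sub_zero]
      exact (hyT n).2.2.2 j hj
  have hinner_yn : 1 ≤ ⟪y n, w⟫ := by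
    have hyv : y n = ‖y n‖ • v n := by
      rw [hv, smul_smul, mul_inv_cancel₀ (hypos n).ne', one_smul]
    calc (1 : ℝ) = 2 * (1 / 2) := by norm_num
    _ ≤ ‖y n‖ * ⟪v n, w⟫ := mul_le_mul h2 h1 (by norm_num) (norm_nonneg _)
    _ = ⟪y n, w⟫ := by rw [← real_inner_smul_left, ← hyv]
  have hznorm : ‖z‖ < ‖y n‖ := by
    have hsq : ‖z‖ ^ 2 < ‖y n‖ ^ 2 := by
      rw [hz, norm_sub_sq_real, hwnorm]
      nlinarith
    exact lt_of_pow_lt_pow_left₀ 2 (norm_nonneg _) hsq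
  have hzS : z ∈ S n :=
    ⟨hzT, by rw [mem_closedBall_zero_iff]; exact le_trans hznorm.le (hyB n)⟩
  have hge : ‖y n‖ ≤ ‖z‖ := hymin n hzS
  exact absurd hge (not_le.2 hznorm)

lemma normJ_continuous : Continuous (fun z : EuclideanSpace ℝ (Fin d) => normJ m z) := by
  unfold normJ
  apply Real.continuous_sqrt.comp
  apply continuous_finset_sum
  intro j _
  by_cases h : m j = 0
  · simp only [if_pos h]
    exact (continuous_coord j).pow 2
  · simp only [if_neg h]
    exact continuous_const

lemma normJ_le_one_of_mem_closure {x : EuclideanSpace ℝ (Fin d)}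
    (hx : x ∈ closure {z : EuclideanSpace ℝ (Fin d) | normJ m z < 1}) : normJ m x ≤ 1 := by
  have hsub : closure {z : EuclideanSpace ℝ (Fin d) | normJ m z < 1}
      ⊆ {z | normJ m z ≤ 1} :=
    closure_minimal (fun z hz => show normJ m z ≤ 1 from le_of_lt hz)
      (isClosed_le (normJ_continuous m) continuous_const)
  exact hsub hx

lemma mem_closure_of_eqJ {x y : EuclideanSpace ℝ (Fin d)}
    (hx : x ∈ closure {z : EuclideanSpace ℝ (Fin d) | normJ m z < 1})
    (h : ∀ j, m j = 0 → y j = x j) :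
    y ∈ closure {z : EuclideanSpace ℝ (Fin d) | normJ m z < 1} := by
  rw [mem_closure_iff_seq_limit] at hx ⊢
  obtain ⟨u, hu, hlim⟩ := hx
  refine ⟨fun n => y + (u n - x), fun n => ?_, ?_⟩
  · show normJ m (y + (u n - x)) < 1
    have heq : normJ m (y + (u n - x)) = normJ m (u n) := by
      unfold normJ
      congr 1
      apply Finset.sum_congr rfl
      intro j _
      by_cases hj : m j = 0
      · simp only [if_pos hj]
        have hcoord : (y + (u n - x)) j = u n j := by
          simp only [PiLp.add_apply, PiLp.sub_apply, h j hj]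
          ring
        rw [hcoord]
      · simp only [if_neg hj]
    rw [heq]
    exact hu n
  · have : Tendsto (fun n => y + (u n - x)) atTop (𝓝 (y + (x - x))) :=
      tendsto_const_nhds.add (hlim.sub tendsto_const_nhds)
    simpa using this

end Aux13

/-- For every sequence `(x_n)` in `K ∩ cl(B_J(0,1)) ∩ G` there is a bounded sequence `(y_n)`
in `K ∩ cl(B_J(0,1)) ∩ G` with `y_n ≤ x_n` coordinatewise and `y_n^{(J)} = x_n^{(J)}`. -/
theorem stmt13 (p q : ℕ) (hp : 1 ≤ p)
    (μ : Measure (EuclideanSpace ℝ (Fin (p + q)))) [IsProbabilityMeasure μ]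
    (m : EuclideanSpace ℝ (Fin (p + q)))
    (hint : Integrable (fun y => y) μ) (hmean : ∫ y, y ∂μ = m)
    (hsq : Integrable (fun y => ‖y‖ ^ 2) μ)
    (hm : m ∈ QZero p q) :
    ∀ x : ℕ → EuclideanSpace ℝ (Fin (p + q)),
      (∀ n, x n ∈ Kcone p q 0 ∩ closure {z | normJ m z < 1} ∩ Gset μ m) →
      ∃ y : ℕ → EuclideanSpace ℝ (Fin (p + q)),
        (∃ C : ℝ, ∀ n, ‖y n‖ ≤ C) ∧
        ∀ n, y n ∈ Kcone p q 0 ∩ closure {z | normJ m z < 1} ∩ Gset μ m ∧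
          (∀ i, y n i ≤ x n i) ∧
          (∀ j, m j = 0 → y n j = x n j) := by
  intro x hx
  obtain ⟨C, hC⟩ := Aux13.key (Fsub μ m) m p (fun i hi => (hm i).2 hi)
  have hx' : ∀ n, ∃ y ∈ Aux13.Tset (Fsub μ m) m p (x n), ‖y‖ ≤ C := by
    intro n
    obtain ⟨⟨hK, hcl⟩, hG⟩ := hx n
    exact hC (x n) hK (Aux13.normJ_le_one_of_mem_closure m hcl) hG
  choose y hyT hyC using hx'
  refine ⟨y, ⟨C, hyC⟩, fun n => ?_⟩
  obtain ⟨hK, hG, hle, hJ⟩ := hyT n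
  exact ⟨⟨⟨hK, Aux13.mem_closure_of_eqJ m (hx n).1.2 hJ⟩, hG⟩, hle, hJ⟩
end
end

section
/- Let x ∈ P with x ≠ 0. Then x is a minimal point of P if and only if the vectors {C_i : i ∈ I(x)} are positively independent, i.e. the only family of nonnegative reals (u_i)_{i∈I(x)} with Σ_{i∈I(x)} u_i C_i = 0 is u_i = 0 for all i ∈ I(x). -/
noncomputable section

/-- The polyhedron `P = {x ∈ ℝ₊^n : Σ_i x_i C_i = b}`. -/
def PolyP {m n : ℕ} (C : Fin n → Fin m → ℝ) (b : Fin m → ℝ) : Set (Fin n → ℝ) :=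
  {x | (∀ i, 0 ≤ x i) ∧ ∑ i, x i • C i = b}

/-- `x` is a *minimal* point of `P` if `x ∈ P` and no `y ∈ P` satisfies `y < x`
(coordinatewise order). -/
def IsMinimalPt {m n : ℕ} (C : Fin n → Fin m → ℝ) (b : Fin m → ℝ) (x : Fin n → ℝ) : Prop :=
  x ∈ PolyP C b ∧ ¬ ∃ y ∈ PolyP C b, y ≤ x ∧ y ≠ x

/-- A nonzero `x ∈ P` is minimal iff the vectors `{C_i : i ∈ I(x)}`, `I(x) = {i : x_i > 0}`,
are positively independent. -/
theorem stmt17 (m n : ℕ) (hm : 1 ≤ m) (hmn : m ≤ n)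
    (C : Fin n → Fin m → ℝ) (b : Fin m → ℝ) (hP : (PolyP C b).Nonempty)
    (x : Fin n → ℝ) (hx : x ∈ PolyP C b) (hx0 : x ≠ 0) :
    IsMinimalPt C b x ↔
      ∀ u : Fin n → ℝ, (∀ i, 0 < x i → 0 ≤ u i) →
        ∑ i ∈ Finset.univ.filter (fun i => 0 < x i), u i • C i = 0 →
        ∀ i, 0 < x i → u i = 0 := by
  obtain ⟨hxnn, hxsum⟩ := hx
  constructor
  · rintro ⟨-, hmin⟩ u hu hsum i hi
    by_contra hne
    have hui : 0 < u i := lt_of_le_of_ne (hu i hi) (Ne.symm hne)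
    -- the set of indices with positive x and positive u
    set S := Finset.univ.filter (fun j => 0 < x j ∧ 0 < u j) with hSdef
    have hiS : i ∈ S := by simp [hSdef, hi, hui]
    have hSne : S.Nonempty := ⟨i, hiS⟩
    set t := S.inf' hSne (fun j => x j / u j) with htdef
    have ht0 : 0 < t := by
      apply Finset.lt_inf'_iff (f := fun j => x j / u j) hSne (a := 0) |>.mpr
      intro j hj
      simp only [hSdef, Finset.mem_filter] at hj
      exact div_pos hj.2.1 hj.2.2
    have htle : ∀ j ∈ S, t * u j ≤ x j := by
      intro j hj
      have h1 : t ≤ x j / u j := Finset.inf'_le _ hj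
      simp only [hSdef, Finset.mem_filter] at hj
      exact (le_div_iff₀ hj.2.2).mp h1
    -- define u' vanishing off I(x)
    set u' : Fin n → ℝ := fun j => if 0 < x j then u j else 0 with hu'def
    have hu'nn : ∀ j, 0 ≤ u' j := by
      intro j
      simp only [hu'def]
      split
      · exact hu j (by assumption)
      · exact le_refl 0
    set y : Fin n → ℝ := fun j => x j - t * u' j with hydef
    have hyle : y ≤ x := by
      intro j
      simp only [hydef]
      nlinarith [hu'nn j, ht0.le, mul_nonneg ht0.le (hu'nn j)]
    have hynn : ∀ j, 0 ≤ y j := by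
      intro j
      simp only [hydef, hu'def]
      by_cases hxj : 0 < x j
      · simp only [hxj, if_true]
        by_cases huj : 0 < u j
        · have := htle j (by simp [hSdef, hxj, huj])
          linarith
        · nlinarith [hu j hxj, ht0.le]
      · simp only [hxj, if_false]
        simpa using hxnn j
    have hu'sum : ∑ j, u' j • C j = 0 := by
      have : ∑ j, u' j • C j
          = ∑ j ∈ Finset.univ.filter (fun j => 0 < x j), u j • C j := by
        rw [Finset.sum_filter]
        apply Finset.sum_congr rfl
        intro j _
        simp only [hu'def]
        split <;> simp
      rw [this, hsum]
    have hysum : ∑ j, y j • C j = b := by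
      have : ∑ j, y j • C j = ∑ j, x j • C j - t • ∑ j, u' j • C j := by
        rw [Finset.smul_sum, ← Finset.sum_sub_distrib]
        apply Finset.sum_congr rfl
        intro j _
        simp only [hydef, sub_smul, smul_smul]
      rw [this, hu'sum, hxsum, smul_zero, sub_zero]
    have hyne : y ≠ x := by
      intro h
      have := congrFun h i
      simp only [hydef, hu'def, hi, if_true] at this
      nlinarith
    exact hmin ⟨y, ⟨hynn, hysum⟩, hyle, hyne⟩
  · intro h
    refine ⟨⟨hxnn, hxsum⟩, ?_⟩
    rintro ⟨y, ⟨hynn, hysum⟩, hyle, hyne⟩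
    apply hyne
    funext j
    set u : Fin n → ℝ := fun j => x j - y j with hudef
    have hunn : ∀ j, 0 ≤ u j := fun j => sub_nonneg.mpr (hyle j)
    have huzero : ∀ j, ¬ 0 < x j → u j = 0 := by
      intro j hj
      have hxj : x j = 0 := le_antisymm (not_lt.mp hj) (hxnn j)
      have : y j = 0 := le_antisymm (hxj ▸ hyle j) (hynn j)
      simp [hudef, hxj, this]
    have husum : ∑ j ∈ Finset.univ.filter (fun j => 0 < x j), u j • C j = 0 := by
      have : ∑ j ∈ Finset.univ.filter (fun j => 0 < x j), u j • C j
          = ∑ j, u j • C j := by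
        rw [Finset.sum_filter]
        apply Finset.sum_congr rfl
        intro j _
        split
        · rfl
        · rw [huzero j (by assumption), zero_smul]
      rw [this]
      have : ∑ j, u j • C j = ∑ j, x j • C j - ∑ j, y j • C j := by
        rw [← Finset.sum_sub_distrib]
        exact Finset.sum_congr rfl fun j _ => by simp [hudef, sub_smul]
      rw [this, hxsum, hysum, sub_self]
    by_cases hj : 0 < x j
    · have := h u (fun i _ => hunn i) husum j hj
      have : x j - y j = 0 := this
      linarith
    · have := huzero j hj
      simp only [hudef] at this
      linarith
end
end
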